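/- arXiv:2005.14027 — 8 statements merged into one kernel-verified Lean document; each statement's English description precedes it below -/
import Mathlib

section
/- Let φ = (1+√5)/2 be the golden mean and Λ = {φ^n : n ∈ ℤ} ∪ {−φ^n : n ∈ ℤ} ⊆ ℝ. Then for p, q ∈ Λ, one has p + q = 1 if and only if (p, q) is one of the six ordered pairs (φ², −φ), (−φ, φ²), (φ, −φ⁻¹), (−φ⁻¹, φ), (φ⁻², φ⁻¹), (φ⁻¹, φ⁻²). -/
/-- The logarithmic lattice with spacing `l`: the set `{±l^n : n ∈ ℤ} ⊆ ℝ`. -/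
def logLattice (l : ℝ) : Set ℝ := {x | ∃ n : ℤ, x = l ^ n ∨ x = -(l ^ n)}

/-- Classification of triads at the unity for the lattice with spacing `λ = φ`,
the golden mean: for `p, q ∈ Λ(φ)`, `p + q = 1` iff `(p,q)` is one of the six
pairs `(φ², −φ), (−φ, φ²), (φ, −φ⁻¹), (−φ⁻¹, φ), (φ⁻², φ⁻¹), (φ⁻¹, φ⁻²)`. -/
theorem triads_at_unity_golden_mean (φ : ℝ) (hφ : φ = (1 + Real.sqrt 5) / 2)
    (p q : ℝ) (hp : p ∈ logLattice φ) (hq : q ∈ logLattice φ) :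
    p + q = 1 ↔
      (p, q) = (φ ^ 2, -φ) ∨ (p, q) = (-φ, φ ^ 2) ∨
      (p, q) = (φ, -φ⁻¹) ∨ (p, q) = (-φ⁻¹, φ) ∨
      (p, q) = (φ⁻¹ ^ 2, φ⁻¹) ∨ (p, q) = (φ⁻¹, φ⁻¹ ^ 2) := by
  have h5 : Real.sqrt 5 ^ 2 = 5 := Real.sq_sqrt (by norm_num)
  have h5pos : 1 < Real.sqrt 5 := by
    nlinarith [Real.sqrt_nonneg 5]
  have h1 : 1 < φ := by rw [hφ]; linarith
  have hpos : 0 < φ := by linarith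
  have hsq : φ ^ 2 = φ + 1 := by rw [hφ]; ring_nf; nlinarith
  have hne : φ ≠ 0 := ne_of_gt hpos
  have hinv : φ⁻¹ = φ - 1 := by
    field_simp; nlinarith
  have hmono := zpow_right_strictMono₀ h1
  have hinj : Function.Injective fun n : ℤ => φ ^ n := hmono.injective
  have hz1 : φ ^ (1:ℤ) = φ := zpow_one φ
  have hz2' : φ ^ (2:ℤ) = φ ^ (2:ℕ) := by
    rw [← zpow_natCast]; norm_num
  have hz2 : φ ^ (2:ℤ) = φ + 1 := by rw [hz2']; exact hsq
  have hzm1 : φ ^ (-1:ℤ) = φ - 1 := by rw [zpow_neg_one, hinv]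
  have hzm2 : φ ^ (-2:ℤ) = 2 - φ := by
    have e : φ ^ (-2:ℤ) = (φ ^ (2:ℤ))⁻¹ := by
      rw [← zpow_neg]
    rw [e, hz2, inv_eq_of_mul_eq_one_right (by nlinarith : (φ + 1) * (2 - φ) = 1)]
  obtain ⟨m, hm⟩ := hp
  obtain ⟨n, hn⟩ := hq
  constructor
  · intro hpq
    rcases hm with hm | hm <;> rcases hn with hn | hn <;> subst hm hn
    · -- φ^m + φ^n = 1
      have hmlt : φ ^ m < 1 := by
        have : (0:ℝ) < φ ^ n := zpow_pos hpos n
        linarith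
      have hnlt : φ ^ n < 1 := by
        have : (0:ℝ) < φ ^ m := zpow_pos hpos m
        linarith
      have hm0 : m ≤ -1 := by
        have := (zpow_lt_zpow_iff_right₀ h1 (m := m) (n := 0)).mp (by simpa using hmlt)
        omega
      have hn0 : n ≤ -1 := by
        have := (zpow_lt_zpow_iff_right₀ h1 (m := n) (n := 0)).mp (by simpa using hnlt)
        omega
      -- claim m = -1 ∨ n = -1
      have key : m = -1 ∨ n = -1 := by
        by_contra h
        push_neg at h
        have hm2 : m ≤ -2 := by omega
        have hn2 : n ≤ -2 := by omega
        have h1m : φ ^ m ≤ φ ^ (-2:ℤ) := hmono.monotone hm2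
        have h1n : φ ^ n ≤ φ ^ (-2:ℤ) := hmono.monotone hn2
        rw [hzm2] at h1m h1n
        have : φ < 2 := by nlinarith
        nlinarith
      rcases key with rfl | rfl
      · have : φ ^ n = φ ^ (-2:ℤ) := by rw [hzm1] at hpq; rw [hzm2]; linarith
        have := hinj this
        subst this
        right; right; right; right; right
        have e1 : φ ^ (-1:ℤ) = φ⁻¹ := zpow_neg_one φ
        have e2 : φ ^ (-2:ℤ) = φ⁻¹ ^ 2 := by rw [hzm2, hinv]; nlinarith
        rw [e1, e2]
      · have : φ ^ m = φ ^ (-2:ℤ) := by rw [hzm1] at hpq; rw [hzm2]; linarith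
        have := hinj this
        subst this
        right; right; right; right; left
        have e1 : φ ^ (-1:ℤ) = φ⁻¹ := zpow_neg_one φ
        have e2 : φ ^ (-2:ℤ) = φ⁻¹ ^ 2 := by rw [hzm2, hinv]; nlinarith
        rw [e1, e2]
    · -- φ^m - φ^n = 1
      have hm1 : 1 < φ ^ m := by
        have : (0:ℝ) < φ ^ n := zpow_pos hpos n
        linarith
      have hmge : 1 ≤ m := by
        have := (zpow_lt_zpow_iff_right₀ h1 (m := 0) (n := m)).mp (by simpa using hm1)
        omega
      have hcase : m = 1 ∨ m = 2 ∨ 3 ≤ m := by omega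
      rcases hcase with rfl | rfl | hm3
      · have : φ ^ n = φ ^ (-1:ℤ) := by rw [hz1] at hpq; rw [hzm1]; linarith
        have := hinj this; subst this
        right; right; left
        rw [zpow_one, zpow_neg_one]
      · have : φ ^ n = φ ^ (1:ℤ) := by rw [hz2] at hpq; rw [hz1]; linarith
        have := hinj this; subst this
        left
        rw [zpow_one, hz2']
      · exfalso
        have hlow : φ ^ (m - 1) < φ ^ n := by
          have e : φ ^ m = φ ^ (m-1) * φ := by
            rw [← zpow_add_one₀ hne]; ring_nf
          have e2 : φ ^ (m-1) = φ ^ (m-2) * φ := by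
            rw [← zpow_add_one₀ hne]; ring_nf
          have hg : φ ≤ φ ^ (m - 2) := by
            calc φ = φ ^ (1:ℤ) := hz1.symm
            _ ≤ _ := hmono.monotone (by omega)
          have : (1:ℝ) < φ ^ (m-2) := lt_of_lt_of_le h1 hg
          nlinarith [zpow_pos hpos (m-1), zpow_pos hpos (m-2)]
        have hhigh : φ ^ n < φ ^ m := by
          have : (0:ℝ) < φ ^ n := zpow_pos hpos n
          linarith
        have a1 := (zpow_lt_zpow_iff_right₀ h1).mp hlow
        have a2 := (zpow_lt_zpow_iff_right₀ h1).mp hhigh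
        omega
    · -- -φ^m + φ^n = 1 : symmetric
      have hn1 : 1 < φ ^ n := by
        have : (0:ℝ) < φ ^ m := zpow_pos hpos m
        linarith
      have hnge : 1 ≤ n := by
        have := (zpow_lt_zpow_iff_right₀ h1 (m := 0) (n := n)).mp (by simpa using hn1)
        omega
      have hcase : n = 1 ∨ n = 2 ∨ 3 ≤ n := by omega
      rcases hcase with rfl | rfl | hn3
      · have : φ ^ m = φ ^ (-1:ℤ) := by rw [hz1] at hpq; rw [hzm1]; linarith
        have := hinj this; subst this
        right; right; right; left
        rw [zpow_one, zpow_neg_one]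
      · have : φ ^ m = φ ^ (1:ℤ) := by rw [hz2] at hpq; rw [hz1]; linarith
        have := hinj this; subst this
        right; left
        rw [zpow_one, hz2']
      · exfalso
        have hlow : φ ^ (n - 1) < φ ^ m := by
          have e : φ ^ n = φ ^ (n-1) * φ := by
            rw [← zpow_add_one₀ hne]; ring_nf
          have e2 : φ ^ (n-1) = φ ^ (n-2) * φ := by
            rw [← zpow_add_one₀ hne]; ring_nf
          have hg : φ ≤ φ ^ (n - 2) := by
            calc φ = φ ^ (1:ℤ) := hz1.symm
            _ ≤ _ := hmono.monotone (by omega)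
          have : (1:ℝ) < φ ^ (n-2) := lt_of_lt_of_le h1 hg
          nlinarith [zpow_pos hpos (n-1), zpow_pos hpos (n-2)]
        have hhigh : φ ^ m < φ ^ n := by
          have : (0:ℝ) < φ ^ m := zpow_pos hpos m
          linarith
        have a1 := (zpow_lt_zpow_iff_right₀ h1).mp hlow
        have a2 := (zpow_lt_zpow_iff_right₀ h1).mp hhigh
        omega
    · exfalso
      have h1' : (0:ℝ) < φ ^ m := zpow_pos hpos m
      have h2' : (0:ℝ) < φ ^ n := zpow_pos hpos n
      linarith
  · rintro (h | h | h | h | h | h) <;> rw [Prod.mk.injEq] at h <;>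
      obtain ⟨rfl, rfl⟩ := h
    · linear_combination hsq
    · linear_combination hsq
    · rw [hinv]; ring
    · rw [hinv]; ring
    · rw [hinv]; linear_combination hsq
    · rw [hinv]; linear_combination hsq
end

section
/- Let σ be the unique real number greater than 1 satisfying σ³ − σ − 1 = 0 (the plastic number), and let Λ = {σ^n : n ∈ ℤ} ∪ {−σ^n : n ∈ ℤ} ⊆ ℝ. Then for p, q ∈ Λ, one has p + q = 1 if and only if (p, q) is one of the twelve ordered pairs (σ³, −σ), (−σ, σ³), (σ², −σ⁻¹), (−σ⁻¹, σ²), (σ⁻³, σ⁻²), (σ⁻², σ⁻³), (σ⁵, −σ⁴), (−σ⁴, σ⁵), (σ, −σ⁻⁴), (−σ⁻⁴, σ), (σ⁻⁵, σ⁻¹), (σ⁻¹, σ⁻⁵). -/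
private lemma zinjP {σ : ℝ} (hσ1 : 1 < σ) {m n : ℤ} (h : σ ^ m = σ ^ n) : m = n :=
  zpow_right_injective₀ (by linarith) (by linarith) h

private lemma minus_case {σ : ℝ} (hσ1 : 1 < σ) (hσ : σ ^ 3 - σ - 1 = 0) {m n : ℤ}
    (h : σ ^ m - σ ^ n = 1) :
    (m = 3 ∧ n = 1) ∨ (m = 2 ∧ n = -1) ∨ (m = 5 ∧ n = 4) ∨ (m = 1 ∧ n = -4) := by
  have hpos : (0:ℝ) < σ := by linarith
  have hne : σ ≠ 0 := ne_of_gt hpos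
  have hzp : ∀ k : ℤ, (0:ℝ) < σ ^ k := fun k => zpow_pos hpos k
  have p1 : σ ^ (1:ℤ) = σ := zpow_one σ
  have p2 : σ ^ (2:ℤ) = σ ^ 2 := by rw [show (2:ℤ) = (2:ℕ) from rfl, zpow_natCast]
  have p3 : σ ^ (3:ℤ) = σ ^ 3 := by rw [show (3:ℤ) = (3:ℕ) from rfl, zpow_natCast]
  have p4 : σ ^ (4:ℤ) = σ ^ 4 := by rw [show (4:ℤ) = (4:ℕ) from rfl, zpow_natCast]
  have p5 : σ ^ (5:ℤ) = σ ^ 5 := by rw [show (5:ℤ) = (5:ℕ) from rfl, zpow_natCast]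
  have hnm : n < m := by
    have : σ ^ n < σ ^ m := by linarith [hzp n, hzp m]
    exact (zpow_lt_zpow_iff_right₀ hσ1).mp this
  obtain ⟨d, hd1, rfl⟩ : ∃ d : ℤ, 1 ≤ d ∧ m = n + d := ⟨m - n, by omega, by omega⟩
  have key : σ ^ n * (σ ^ d - 1) = 1 := by
    have := zpow_add₀ hne n d
    nlinarith [h, this]
  have e4 : σ ^ (4:ℤ) * (σ - 1) = 1 := by rw [p4]; linear_combination (σ^2 - σ + 1) * hσ
  have hd5 : d ≤ 5 := by
    by_contra hd6
    push_neg at hd6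
    have hgt : σ ^ (4:ℤ) < σ ^ (d-1) := zpow_lt_zpow_right₀ hσ1 (by omega)
    have hstep : σ ^ (d-1) * σ = σ ^ d := by
      rw [← zpow_add_one₀ hne, sub_add_cancel]
    have hgap : σ ^ (d-1) < σ ^ d - 1 := by nlinarith [hzp (4:ℤ), hzp (d-1)]
    have hB : σ ^ (n + (d-1)) < σ ^ (0:ℤ) := by
      rw [zpow_add₀ hne, zpow_zero]
      nlinarith [hzp n, key, hgap]
    have hA : σ ^ (0:ℤ) < σ ^ (n + d) := by
      rw [zpow_add₀ hne, zpow_zero]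
      nlinarith [hzp n, key]
    have h1 := (zpow_lt_zpow_iff_right₀ hσ1).mp hB
    have h2 := (zpow_lt_zpow_iff_right₀ hσ1).mp hA
    omega
  have hd' : d = 1 ∨ d = 2 ∨ d = 3 ∨ d = 4 ∨ d = 5 := by omega
  rcases hd' with rfl | rfl | rfl | rfl | rfl
  · -- d = 1
    rw [p1] at key
    have hc : σ - 1 ≠ 0 := by linarith
    have : σ ^ n = σ ^ (4:ℤ) := mul_right_cancel₀ hc (key.trans e4.symm)
    have := zinjP hσ1 this
    right; right; left; omega
  · -- d = 2
    have e : σ ^ (1:ℤ) * (σ ^ (2:ℤ) - 1) = 1 := by rw [p1, p2]; linear_combination hσ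
    have : σ ^ n = σ ^ (1:ℤ) := by
      have hc : σ ^ (2:ℤ) - 1 ≠ 0 := by
        rw [p2]
        have h2 : (1:ℝ) < σ ^ 2 := by nlinarith [hσ1, sq_nonneg (σ - 1)]
        intro hh; linarith
      exact mul_right_cancel₀ hc (key.trans e.symm)
    have := zinjP hσ1 this
    left; omega
  · -- d = 3
    have e : σ ^ (-1:ℤ) * (σ ^ (3:ℤ) - 1) = 1 := by
      rw [p3, zpow_neg, zpow_one, show σ ^ 3 - 1 = σ by linarith, inv_mul_cancel₀ hne]
    have : σ ^ n = σ ^ (-1:ℤ) := by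
      have hc : σ ^ (3:ℤ) - 1 ≠ 0 := by
        rw [p3]
        have h3 : (1:ℝ) < σ ^ 3 := by nlinarith [hσ1]
        intro hh; linarith
      exact mul_right_cancel₀ hc (key.trans e.symm)
    have := zinjP hσ1 this
    right; left; omega
  · -- d = 4 : impossible
    exfalso
    have h2lt : σ ^ 2 < 2 := by
      have h3 : σ * σ ^ 2 < σ * 2 := by nlinarith [hσ1, hσ]
      exact lt_of_mul_lt_mul_left h3 hpos.le
    have e42 : σ ^ 4 - σ ^ 2 = σ := by linear_combination σ * hσ
    have hlow : σ ^ 2 < σ ^ (4:ℤ) - 1 := by rw [p4]; linarith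
    have hhigh : σ ^ (4:ℤ) - 1 < σ ^ 3 := by rw [p4]; nlinarith
    have hB : σ ^ (n + 2) < σ ^ (0:ℤ) := by
      rw [zpow_add₀ hne, zpow_zero, p2]
      have := mul_lt_mul_of_pos_left hlow (hzp n)
      linarith [key, this]
    have hA : σ ^ (0:ℤ) < σ ^ (n + 3) := by
      rw [zpow_add₀ hne, zpow_zero, p3]
      have := mul_lt_mul_of_pos_left hhigh (hzp n)
      linarith [key, this]
    have h1 := (zpow_lt_zpow_iff_right₀ hσ1).mp hB
    have h2 := (zpow_lt_zpow_iff_right₀ hσ1).mp hA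
    omega
  · -- d = 5
    have e : σ ^ (-4:ℤ) * (σ ^ (5:ℤ) - 1) = 1 := by
      rw [p5, show (-4:ℤ) = -(4:ℤ) from rfl, zpow_neg, p4]
      have h4 : σ ^ 4 ≠ 0 := by positivity
      field_simp
      linear_combination (σ^2 - σ + 1) * hσ
    have : σ ^ n = σ ^ (-4:ℤ) := by
      have hc : σ ^ (5:ℤ) - 1 ≠ 0 := by
        rw [p5]
        have hq34 : σ ^ 5 - σ ^ 4 = 1 := by linear_combination (σ^2 - σ + 1) * hσ
        have h4 : (0:ℝ) < σ ^ 4 := by positivity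
        intro hh; clear * - hq34 h4 hh; linarith
      exact mul_right_cancel₀ hc (key.trans e.symm)
    have := zinjP hσ1 this
    right; right; right; omega

private lemma plus_aux {σ : ℝ} (hσ1 : 1 < σ) (hσ : σ ^ 3 - σ - 1 = 0) {m n : ℤ}
    (h : σ ^ m + σ ^ n = 1) (hnm : n ≤ m) :
    (m = -2 ∧ n = -3) ∨ (m = -1 ∧ n = -5) := by
  have hpos : (0:ℝ) < σ := by linarith
  have hne : σ ≠ 0 := ne_of_gt hpos
  have hzp : ∀ k : ℤ, (0:ℝ) < σ ^ k := fun k => zpow_pos hpos k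
  have p3 : σ ^ (3:ℤ) = σ ^ 3 := by rw [show (3:ℤ) = (3:ℕ) from rfl, zpow_natCast]
  have hmn' : σ ^ n ≤ σ ^ m := zpow_le_zpow_right₀ hσ1.le hnm
  have hm0 : m < 0 := by
    have : σ ^ m < σ ^ (0:ℤ) := by rw [zpow_zero]; linarith [hzp n]
    exact (zpow_lt_zpow_iff_right₀ hσ1).mp this
  have hm3 : -3 < m := by
    have e3 : σ ^ (-3:ℤ) = (σ ^ 3)⁻¹ := by rw [zpow_neg, p3]
    have h3gt : (2:ℝ) < σ ^ 3 := by nlinarith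
    have : σ ^ (-3:ℤ) < σ ^ m := by
      rw [e3]
      have : (σ ^ 3)⁻¹ < 1/2 := by
        rw [inv_lt_comm₀ (by positivity) (by norm_num)]
        linarith
      linarith
    exact (zpow_lt_zpow_iff_right₀ hσ1).mp this
  have hm' : m = -2 ∨ m = -1 := by omega
  rcases hm' with rfl | rfl
  · -- m = -2
    have e : σ ^ (-3:ℤ) + σ ^ (-2:ℤ) = 1 := by
      rw [show (-3:ℤ) = -(3:ℤ) from rfl, show (-2:ℤ) = -(2:ℤ) from rfl, zpow_neg, zpow_neg, p3,
        show σ ^ (2:ℤ) = σ ^ 2 by rw [show (2:ℤ) = (2:ℕ) from rfl, zpow_natCast]]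
      field_simp
      linear_combination (-1) * hσ
    have : σ ^ n = σ ^ (-3:ℤ) := by linarith
    have := zinjP hσ1 this
    left; omega
  · -- m = -1
    have e : σ ^ (-5:ℤ) + σ ^ (-1:ℤ) = 1 := by
      rw [show (-5:ℤ) = -(5:ℤ) from rfl, zpow_neg, zpow_neg, zpow_one,
        show σ ^ (5:ℤ) = σ ^ 5 by rw [show (5:ℤ) = (5:ℕ) from rfl, zpow_natCast]]
      field_simp
      linear_combination (-(σ^2 - σ + 1)) * hσ
    have : σ ^ n = σ ^ (-5:ℤ) := by linarith
    have := zinjP hσ1 this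
    right; omega

private lemma plus_case {σ : ℝ} (hσ1 : 1 < σ) (hσ : σ ^ 3 - σ - 1 = 0) {m n : ℤ}
    (h : σ ^ m + σ ^ n = 1) :
    (m = -2 ∧ n = -3) ∨ (m = -3 ∧ n = -2) ∨ (m = -1 ∧ n = -5) ∨ (m = -5 ∧ n = -1) := by
  rcases le_total n m with hnm | hmn
  · rcases plus_aux hσ1 hσ h hnm with ⟨h1, h2⟩ | ⟨h1, h2⟩
    · left; exact ⟨h1, h2⟩
    · right; right; left; exact ⟨h1, h2⟩
  · rcases plus_aux hσ1 hσ (by linarith) hmn with ⟨h1, h2⟩ | ⟨h1, h2⟩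
    · right; left; exact ⟨h2, h1⟩
    · right; right; right; exact ⟨h2, h1⟩

/-- Classification of triads at the unity for the lattice with spacing `λ = σ`,
the plastic number (the unique real root `> 1` of `x³ − x − 1 = 0`): for
`p, q ∈ Λ(σ)`, `p + q = 1` iff `(p,q)` is one of the twelve listed pairs. -/
theorem triads_at_unity_plastic (σ : ℝ) (hσ1 : 1 < σ) (hσ : σ ^ 3 - σ - 1 = 0)
    (p q : ℝ) (hp : p ∈ logLattice σ) (hq : q ∈ logLattice σ) :
    p + q = 1 ↔
      (p, q) = (σ ^ 3, -σ) ∨ (p, q) = (-σ, σ ^ 3) ∨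
      (p, q) = (σ ^ 2, -σ⁻¹) ∨ (p, q) = (-σ⁻¹, σ ^ 2) ∨
      (p, q) = (σ⁻¹ ^ 3, σ⁻¹ ^ 2) ∨ (p, q) = (σ⁻¹ ^ 2, σ⁻¹ ^ 3) ∨
      (p, q) = (σ ^ 5, -σ ^ 4) ∨ (p, q) = (-σ ^ 4, σ ^ 5) ∨
      (p, q) = (σ, -σ⁻¹ ^ 4) ∨ (p, q) = (-σ⁻¹ ^ 4, σ) ∨
      (p, q) = (σ⁻¹ ^ 5, σ⁻¹) ∨ (p, q) = (σ⁻¹, σ⁻¹ ^ 5) := by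
  have hpos : (0:ℝ) < σ := by linarith
  have hne : σ ≠ 0 := ne_of_gt hpos
  have hzp : ∀ k : ℤ, (0:ℝ) < σ ^ k := fun k => zpow_pos hpos k
  have hinv : σ⁻¹ ≠ 0 := inv_ne_zero hne
  have e1 : σ ^ (1:ℤ) = σ := zpow_one σ
  have e2 : σ ^ (2:ℤ) = σ ^ 2 := by rw [show (2:ℤ) = (2:ℕ) from rfl, zpow_natCast]
  have e3 : σ ^ (3:ℤ) = σ ^ 3 := by rw [show (3:ℤ) = (3:ℕ) from rfl, zpow_natCast]
  have e4 : σ ^ (4:ℤ) = σ ^ 4 := by rw [show (4:ℤ) = (4:ℕ) from rfl, zpow_natCast]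
  have e5 : σ ^ (5:ℤ) = σ ^ 5 := by rw [show (5:ℤ) = (5:ℕ) from rfl, zpow_natCast]
  have c1 : σ ^ (-1:ℤ) = σ⁻¹ := by rw [zpow_neg, zpow_one]
  have c2 : σ ^ (-2:ℤ) = σ⁻¹ ^ 2 := by
    rw [show (-2:ℤ) = -(2:ℤ) from rfl, zpow_neg, e2, ← inv_pow]
  have c3 : σ ^ (-3:ℤ) = σ⁻¹ ^ 3 := by
    rw [show (-3:ℤ) = -(3:ℤ) from rfl, zpow_neg, e3, ← inv_pow]
  have c4 : σ ^ (-4:ℤ) = σ⁻¹ ^ 4 := by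
    rw [show (-4:ℤ) = -(4:ℤ) from rfl, zpow_neg, e4, ← inv_pow]
  have c5 : σ ^ (-5:ℤ) = σ⁻¹ ^ 5 := by
    rw [show (-5:ℤ) = -(5:ℤ) from rfl, zpow_neg, e5, ← inv_pow]
  obtain ⟨a, ha⟩ := hp
  obtain ⟨b, hb⟩ := hq
  constructor
  · intro h
    rcases ha with ha | ha <;> rcases hb with hb | hb <;> subst ha <;> subst hb
    · -- both positive
      rcases plus_case hσ1 hσ h with ⟨hm, hn⟩ | ⟨hm, hn⟩ | ⟨hm, hn⟩ | ⟨hm, hn⟩ <;>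
        subst hm <;> subst hn
      · right; right; right; right; right; left; rw [c2, c3]
      · right; right; right; right; left; rw [c3, c2]
      · right; right; right; right; right; right; right; right; right; right; right
        rw [c1, c5]
      · right; right; right; right; right; right; right; right; right; right; left
        rw [c5, c1]
    · -- p positive, q negative
      have h' : σ ^ a - σ ^ b = 1 := by linarith
      rcases minus_case hσ1 hσ h' with ⟨hm, hn⟩ | ⟨hm, hn⟩ | ⟨hm, hn⟩ | ⟨hm, hn⟩ <;>
        subst hm <;> subst hn
      · left; rw [e3, e1]
      · right; right; left; rw [e2, c1]
      · right; right; right; right; right; right; left; rw [e5, e4]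
      · right; right; right; right; right; right; right; right; left; rw [e1, c4]
    · -- p negative, q positive
      have h' : σ ^ b - σ ^ a = 1 := by linarith
      rcases minus_case hσ1 hσ h' with ⟨hm, hn⟩ | ⟨hm, hn⟩ | ⟨hm, hn⟩ | ⟨hm, hn⟩ <;>
        subst hm <;> subst hn
      · right; left; rw [e3, e1]
      · right; right; right; left; rw [e2, c1]
      · right; right; right; right; right; right; right; left; rw [e5, e4]
      · right; right; right; right; right; right; right; right; right; left; rw [e1, c4]
    · -- both negative: impossible
      exfalso
      have := hzp a
      have := hzp b
      linarith
  · intro h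
    have hq34 : σ ^ 5 - σ ^ 4 = 1 := by linear_combination (σ^2 - σ + 1) * hσ
    rcases h with h | h | h | h | h | h | h | h | h | h | h | h <;>
      simp only [Prod.mk.injEq] at h <;> rw [h.1, h.2]
    · linarith
    · linarith
    · field_simp; linear_combination hσ
    · field_simp; linear_combination hσ
    · field_simp; linear_combination (-1) * hσ
    · field_simp; linear_combination (-1) * hσ
    · linarith
    · linarith
    · field_simp; linear_combination (σ^2 - σ + 1) * hσ
    · field_simp; linear_combination (σ^2 - σ + 1) * hσ
    · field_simp; linear_combination (-(σ^2 - σ + 1)) * hσ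
    · field_simp; linear_combination (-(σ^2 - σ + 1)) * hσ
end

section
/- Let λ ≥ 1.05 be a real number and Λ = Λ(λ). Call two points x, y ∈ Λ directly interacting if there exist k, p, q ∈ Λ with k = p + q such that both x and y belong to {k, p, q}; call Λ nondegenerate if every two points of Λ are joined by a finite chain of directly interacting points (i.e., the reflexive-transitive closure of the direct-interaction relation connects any two lattice points). Then Λ is nondegenerate if and only if one of the following holds: (i) λ = 2; (ii) λ = σ, the plastic number; (iii) λ^b − λ^a = 1 for some mutually prime integers a, b with 0 ≤ a < b ≤ 62 and (a, b) ∉ {(1,3), (4,5)}. -/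
/-- Two points `x, y` directly interact on the lattice `Λ(l)` if there is a triad
`k = p + q` of lattice points such that both `x` and `y` belong to `{k, p, q}`. -/
def DirectlyInteract (l : ℝ) (x y : ℝ) : Prop :=
  ∃ k p q : ℝ, k ∈ logLattice l ∧ p ∈ logLattice l ∧ q ∈ logLattice l ∧
    k = p + q ∧ x ∈ ({k, p, q} : Set ℝ) ∧ y ∈ ({k, p, q} : Set ℝ)

/-- The lattice `Λ(l)` is nondegenerate if every two lattice points are joined by a
finite chain of directly interacting points (reflexive-transitive closure). -/
def Nondegenerate (l : ℝ) : Prop :=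
  ∀ x ∈ logLattice l, ∀ y ∈ logLattice l, Relation.ReflTransGen (DirectlyInteract l) x y



set_option exponentiation.threshold 10000
set_option maxHeartbeats 1000000

namespace NondegAux


/-- Bad pairs `(A, B, m)`: `A < B ≤ 62`, `gcd A B ≥ 2`, and the unique root `> 1` of
`x^B - x^A = 1` lies in `(m/10^7, (m+1)/10^7)`. -/
def LL : List (Nat × Nat × Nat) := [
(0, 2, 14142135),
(0, 3, 12599210),
(0, 4, 11892071),
(2, 4, 12720196),
(0, 5, 11486983),
(0, 6, 11224620),
(2, 6, 11509639),
(3, 6, 11739849),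
(4, 6, 12106077),
(0, 7, 11040895),
(0, 8, 10905077),
(2, 8, 11048728),
(4, 8, 11278384),
(6, 8, 11748521),
(0, 9, 10800597),
(3, 9, 10982666),
(6, 9, 11358883),
(0, 10, 10717734),
(2, 10, 10804184),
(4, 10, 10926386),
(5, 10, 11010258),
(6, 10, 11119827),
(8, 10, 11509639),
(0, 11, 10650410),
(0, 12, 10594630),
(2, 12, 10652343),
(3, 12, 10687469),
(4, 12, 10728298),
(6, 12, 10835058),
(8, 12, 11002762),
(9, 12, 11134109),
(10, 12, 11336661),
(0, 13, 10547660),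
(0, 14, 10507566),
(2, 14, 10548818),
(4, 14, 10600626),
(6, 14, 10668560),
(7, 14, 10711625),
(8, 14, 10763604),
(10, 14, 10911978),
(12, 14, 11204565),
(3, 15, 10529182),
(5, 15, 10578514),
(6, 15, 10608427),
(9, 15, 10733269),
(10, 15, 10794471),
(12, 15, 10982666),
(4, 16, 10511293),
(6, 16, 10558398),
(8, 16, 10619974),
(10, 16, 10705787),
(12, 16, 10839059),
(14, 16, 11099795),
(8, 18, 10523079),
(9, 18, 10549232),
(10, 18, 10579473),
(12, 18, 10657806),
(14, 18, 10778924),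
(15, 18, 10872350),
(16, 18, 11014307),
(12, 20, 10545059),
(14, 20, 10617191),
(15, 20, 10665796),
(16, 20, 10728298),
(18, 20, 10942995),
(12, 21, 10502801),
(14, 21, 10561248),
(15, 21, 10599100),
(18, 21, 10787728),
(14, 22, 10515361),
(16, 22, 10582262),
(18, 22, 10684968),
(20, 22, 10882446),
(18, 24, 10551828),
(20, 24, 10647376),
(21, 24, 10720375),
(22, 24, 10830285),
(20, 25, 10578514),
(20, 26, 10525019),
(22, 26, 10614388),
(24, 26, 10784803),
(21, 27, 10512764),
(24, 27, 10665260),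
(22, 28, 10501184),
(24, 28, 10585162),
(26, 28, 10744736),
(25, 30, 10514632),
(26, 30, 10559051),
(27, 30, 10619175),
(28, 30, 10709127),
(28, 32, 10535556),
(30, 32, 10677237),
(30, 33, 10579967),
(30, 34, 10514281),
(32, 34, 10648485),
(33, 36, 10546133),
(34, 36, 10622409),
(36, 38, 10598635),
(36, 39, 10516586),
(38, 40, 10576857),
(40, 42, 10556821),
(42, 44, 10538318),
(44, 46, 10521170),
(46, 48, 10505226)]

def f1 (A B : Nat) : Bool := decide (2 ≤ Nat.gcd A B →
  (105^B > 100^B + 105^A * 100^(B-A) ∨ (A,B) ∈ (LL.map (fun e => (e.1, e.2.1)))))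

theorem F1chk : ((List.range 63).all fun B => (List.range B).all fun A => f1 A B) = true := by decide

def f2 (e : Nat × Nat × Nat) : Bool :=
  decide (e.1 < e.2.1 ∧ e.2.1 ≤ 62 ∧ 10^7 ≤ e.2.2 ∧ 2 ≤ Nat.gcd e.1 e.2.1 ∧
    e.2.2^e.2.1 < 10^(7*e.2.1) + e.2.2^e.1 * 10^(7*(e.2.1-e.1)) ∧
    10^(7*e.2.1) + (e.2.2+1)^e.1 * 10^(7*(e.2.1-e.1)) < (e.2.2+1)^e.2.1)

theorem F2chk : LL.all f2 = true := by decide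

def f3 (e e' : Nat × Nat × Nat) : Bool :=
  decide (Nat.gcd e.1 e.2.1 = Nat.gcd e'.1 e'.2.1 ∨ e.2.2 + 1 ≤ e'.2.2 ∨ e'.2.2 + 1 ≤ e.2.2)

theorem F3chk : (LL.all fun e => LL.all fun e' => f3 e e') = true := by decide

theorem F1' (A B : ℕ) (h2 : 2 ≤ Nat.gcd A B) (hB : B < 63) (hA : A < B) :
    105^B > 100^B + 105^A * 100^(B-A) ∨ ∃ m, (A, B, m) ∈ LL := by
  have h := F1chk
  rw [List.all_eq_true] at h
  have h' := h B (List.mem_range.mpr hB)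
  rw [List.all_eq_true] at h'
  have h'' := h' A (List.mem_range.mpr hA)
  unfold f1 at h''
  rcases of_decide_eq_true h'' h2 with hbig | hmem
  · exact Or.inl hbig
  · obtain ⟨⟨a', b', m⟩, hm, heq⟩ := List.mem_map.mp hmem
    simp only [Prod.mk.injEq] at heq
    exact Or.inr ⟨m, by rw [← heq.1, ← heq.2]; exact hm⟩

theorem F2' {A B m : ℕ} (h : (A, B, m) ∈ LL) :
    A < B ∧ B ≤ 62 ∧ 10^7 ≤ m ∧ 2 ≤ Nat.gcd A B ∧
    m^B < 10^(7*B) + m^A * 10^(7*(B-A)) ∧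
    10^(7*B) + (m+1)^A * 10^(7*(B-A)) < (m+1)^B := by
  have h2 := List.all_eq_true.mp F2chk _ h
  unfold f2 at h2
  exact of_decide_eq_true h2

theorem F3' {A B m A' B' m' : ℕ} (h : (A, B, m) ∈ LL) (h' : (A', B', m') ∈ LL) :
    Nat.gcd A B = Nat.gcd A' B' ∨ m + 1 ≤ m' ∨ m' + 1 ≤ m := by
  have h2 := List.all_eq_true.mp (List.all_eq_true.mp F3chk _ h) _ h'
  unfold f3 at h2
  exact of_decide_eq_true h2



theorem pow_sub_strictMono {x y : ℝ} (hx : 1 ≤ x) (hxy : x < y) {A B : ℕ} (hAB : A < B) :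
    x ^ B - x ^ A < y ^ B - y ^ A := by
  have hx0 : (0:ℝ) ≤ x := by linarith
  have e1 : x ^ B = x ^ A * x ^ (B - A) := by rw [← pow_add]; congr 1; omega
  have e2 : y ^ B = y ^ A * y ^ (B - A) := by rw [← pow_add]; congr 1; omega
  have h1 : x ^ A ≤ y ^ A := pow_le_pow_left₀ hx0 hxy.le A
  have h2 : x ^ (B - A) < y ^ (B - A) := pow_lt_pow_left₀ hxy hx0 (by omega)
  have h3 : (1:ℝ) ≤ x ^ (B - A) := one_le_pow₀ hx
  have hy0 : (0:ℝ) < y := by linarith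
  have h4 : (0:ℝ) < y ^ A := by positivity
  have h5 : x ^ A * (x ^ (B - A) - 1) < y ^ A * (y ^ (B - A) - 1) :=
    mul_lt_mul' h1 (by linarith) (by linarith) h4
  rw [e1, e2]; nlinarith [h5]

theorem pow_sub_mono {x y : ℝ} (hx : 1 ≤ x) (hxy : x ≤ y) {A B : ℕ} (hAB : A < B) :
    x ^ B - x ^ A ≤ y ^ B - y ^ A := by
  rcases eq_or_lt_of_le hxy with rfl | h
  · exact le_refl _
  · exact (pow_sub_strictMono hx h hAB).le

theorem cast_lt_one {m d A B : ℕ} (hd : 0 < d) (hAB : A < B)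
    (h : m ^ B < d ^ B + m ^ A * d ^ (B - A)) : ((m:ℝ) / d) ^ B - ((m:ℝ) / d) ^ A < 1 := by
  have hd' : (0:ℝ) < (d:ℝ) := by exact_mod_cast hd
  have hdB : (0:ℝ) < (d:ℝ) ^ B := by positivity
  have hsplit : (d:ℝ) ^ B = (d:ℝ) ^ A * (d:ℝ) ^ (B - A) := by rw [← pow_add]; congr 1; omega
  have key : ((m:ℝ) / d) ^ B - ((m:ℝ) / d) ^ A
      = ((m:ℝ) ^ B - (m:ℝ) ^ A * (d:ℝ) ^ (B - A)) / (d:ℝ) ^ B := by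
    have hdA : ((d:ℝ)) ^ A ≠ 0 := by positivity
    have hdB' : ((d:ℝ)) ^ B ≠ 0 := hdB.ne'
    rw [div_pow, div_pow]
    field_simp
    rw [hsplit]; ring
  rw [key, div_lt_one hdB]
  have hc : (m:ℝ) ^ B < (d:ℝ) ^ B + (m:ℝ) ^ A * (d:ℝ) ^ (B - A) := by exact_mod_cast h
  linarith

theorem cast_one_lt {m d A B : ℕ} (hd : 0 < d) (hAB : A < B)
    (h : d ^ B + m ^ A * d ^ (B - A) < m ^ B) : 1 < ((m:ℝ) / d) ^ B - ((m:ℝ) / d) ^ A := by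
  have hd' : (0:ℝ) < (d:ℝ) := by exact_mod_cast hd
  have hdB : (0:ℝ) < (d:ℝ) ^ B := by positivity
  have hsplit : (d:ℝ) ^ B = (d:ℝ) ^ A * (d:ℝ) ^ (B - A) := by rw [← pow_add]; congr 1; omega
  have key : ((m:ℝ) / d) ^ B - ((m:ℝ) / d) ^ A
      = ((m:ℝ) ^ B - (m:ℝ) ^ A * (d:ℝ) ^ (B - A)) / (d:ℝ) ^ B := by
    have hdA : ((d:ℝ)) ^ A ≠ 0 := by positivity
    have hdB' : ((d:ℝ)) ^ B ≠ 0 := hdB.ne'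
    rw [div_pow, div_pow]
    field_simp
    rw [hsplit]; ring
  rw [key, lt_div_iff₀ hdB, one_mul]
  have hc : (d:ℝ) ^ B + (m:ℝ) ^ A * (d:ℝ) ^ (B - A) < (m:ℝ) ^ B := by exact_mod_cast h
  linarith

theorem Ble62 {l : ℝ} (hl : (1.05:ℝ) ≤ l) {A B : ℕ} (hAB : A < B)
    (heq : l ^ B - l ^ A = 1) : B ≤ 62 := by
  have hl1 : (1:ℝ) ≤ l := by norm_num at hl ⊢; linarith
  have h5 : l ^ A * (l ^ (B - A) - 1) = 1 := by
    rw [mul_sub, mul_one, ← pow_add, show A + (B - A) = B from by omega]; exact heq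
  have h2 : l ≤ l ^ (B - A) := le_self_pow₀ hl1 (by omega)
  have h4 : (0:ℝ) < l ^ A := by positivity
  have hA20 : l ^ A ≤ 20 := by nlinarith
  have hB21 : l ^ B ≤ 21 := by
    have h6 : (1:ℝ) ≤ l ^ A := one_le_pow₀ hl1
    nlinarith
  by_contra hB
  have h63 : (1.05:ℝ) ^ 63 ≤ l ^ 63 := pow_le_pow_left₀ (by norm_num) hl 63
  have h63B : l ^ 63 ≤ l ^ B := pow_le_pow_right₀ hl1 (by omega)
  have : (21:ℝ) < 1.05 ^ 63 := by norm_num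
  linarith



theorem mem_lat_pos (l : ℝ) (n : ℤ) : l ^ n ∈ logLattice l := ⟨n, Or.inl rfl⟩
theorem mem_lat_neg (l : ℝ) (n : ℤ) : -(l ^ n) ∈ logLattice l := ⟨n, Or.inr rfl⟩

theorem di_symm (l : ℝ) : Symmetric (DirectlyInteract l) := by
  rintro x y ⟨k, p, q, hk, hp, hq, he, hx, hy⟩
  exact ⟨k, p, q, hk, hp, hq, he, hy, hx⟩

theorem di_rep {l : ℝ} {x y : ℝ} (h : DirectlyInteract l x y) :
    (∃ mx : ℤ, x = l ^ mx ∨ x = -(l ^ mx)) ∧ (∃ my : ℤ, y = l ^ my ∨ y = -(l ^ my)) := by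
  obtain ⟨k, p, q, hk, hp, hq, _, hx, hy⟩ := h
  constructor
  · rcases hx with rfl | rfl | rfl
    exacts [hk, hp, hq]
  · rcases hy with rfl | rfl | rfl
    exacts [hk, hp, hq]

section Connect

variable {l : ℝ} (hl1 : 1 < l) {a b : ℕ}

theorem key_eq (hl0 : l ≠ 0) (h : l ^ b - l ^ a = 1) (n : ℤ) :
    l ^ (n + (b:ℤ)) = l ^ (n + (a:ℤ)) + l ^ n := by
  rw [zpow_add₀ hl0, zpow_add₀ hl0, zpow_natCast, zpow_natCast]
  have hb : (l:ℝ) ^ b = l ^ a + 1 := by linarith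
  rw [hb]; ring

variable (heq : ∀ n : ℤ, l ^ (n + (b:ℤ)) = l ^ (n + (a:ℤ)) + l ^ n)

include heq in
theorem step_a (n : ℤ) : DirectlyInteract l (l ^ n) (l ^ (n + (a:ℤ))) :=
  ⟨l ^ (n + (b:ℤ)), l ^ (n + (a:ℤ)), l ^ n, mem_lat_pos _ _, mem_lat_pos _ _, mem_lat_pos _ _,
    heq n, Or.inr (Or.inr rfl), Or.inr (Or.inl rfl)⟩

include heq in
theorem step_b (n : ℤ) : DirectlyInteract l (l ^ n) (l ^ (n + (b:ℤ))) :=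
  ⟨l ^ (n + (b:ℤ)), l ^ (n + (a:ℤ)), l ^ n, mem_lat_pos _ _, mem_lat_pos _ _, mem_lat_pos _ _,
    heq n, Or.inr (Or.inr rfl), Or.inl rfl⟩

include heq in
theorem step_a_neg (n : ℤ) : DirectlyInteract l (-(l ^ n)) (-(l ^ (n + (a:ℤ)))) :=
  ⟨-(l ^ (n + (b:ℤ))), -(l ^ (n + (a:ℤ))), -(l ^ n), mem_lat_neg _ _, mem_lat_neg _ _,
    mem_lat_neg _ _, by rw [heq n]; ring, Or.inr (Or.inr rfl), Or.inr (Or.inl rfl)⟩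

include heq in
theorem step_b_neg (n : ℤ) : DirectlyInteract l (-(l ^ n)) (-(l ^ (n + (b:ℤ)))) :=
  ⟨-(l ^ (n + (b:ℤ))), -(l ^ (n + (a:ℤ))), -(l ^ n), mem_lat_neg _ _, mem_lat_neg _ _,
    mem_lat_neg _ _, by rw [heq n]; ring, Or.inr (Or.inr rfl), Or.inl rfl⟩

include heq in
theorem step_cross (n : ℤ) : DirectlyInteract l (-(l ^ n)) (l ^ (n + (a:ℤ))) :=
  ⟨l ^ (n + (a:ℤ)), l ^ (n + (b:ℤ)), -(l ^ n), mem_lat_pos _ _, mem_lat_pos _ _,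
    mem_lat_neg _ _, by rw [heq n]; ring, Or.inr (Or.inr rfl), Or.inl rfl⟩

theorem J_shift {d : ℕ} (hd : ∀ n : ℤ, DirectlyInteract l (l ^ n) (l ^ (n + (d:ℤ))))
    (n : ℤ) (t : ℤ) : Relation.ReflTransGen (DirectlyInteract l) (l ^ n) (l ^ (n + t * d)) := by
  induction t using Int.induction_on with
  | zero => simpa using Relation.ReflTransGen.refl
  | succ k ih =>
      have h2 : (n + k * d) + d = n + (k + 1) * d := by ring
      exact ih.tail (h2 ▸ hd (n + k * d))
  | pred k ih =>
      have h2 : (n + (-k - 1) * d) + d = n + (-k) * d := by ring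
      have := di_symm l (h2 ▸ hd (n + (-k - 1) * d))
      exact ih.tail this

theorem J_shift_neg {d : ℕ}
    (hd : ∀ n : ℤ, DirectlyInteract l (-(l ^ n)) (-(l ^ (n + (d:ℤ)))))
    (n : ℤ) (t : ℤ) :
    Relation.ReflTransGen (DirectlyInteract l) (-(l ^ n)) (-(l ^ (n + t * d))) := by
  induction t using Int.induction_on with
  | zero => simpa using Relation.ReflTransGen.refl
  | succ k ih =>
      have h2 : (n + k * d) + d = n + (k + 1) * d := by ring
      exact ih.tail (h2 ▸ hd (n + k * d))
  | pred k ih =>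
      have h2 : (n + (-k - 1) * d) + d = n + (-k) * d := by ring
      have := di_symm l (h2 ▸ hd (n + (-k - 1) * d))
      exact ih.tail this

include heq in
theorem J_pos (hco : Nat.Coprime a b) (m n : ℤ) :
    Relation.ReflTransGen (DirectlyInteract l) (l ^ m) (l ^ n) := by
  obtain ⟨u, v, huv⟩ := Nat.isCoprime_iff_coprime.mpr hco
  have h1 := J_shift (step_a heq) m ((n - m) * u)
  have h2 := J_shift (step_b heq) (m + (n - m) * u * a) ((n - m) * v)
  have h3 : m + (n - m) * u * a + (n - m) * v * b = n := by linear_combination (n - m) * huv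
  rw [h3] at h2
  exact h1.trans h2

include heq in
theorem J_neg (hco : Nat.Coprime a b) (m n : ℤ) :
    Relation.ReflTransGen (DirectlyInteract l) (-(l ^ m)) (-(l ^ n)) := by
  obtain ⟨u, v, huv⟩ := Nat.isCoprime_iff_coprime.mpr hco
  have h1 := J_shift_neg (step_a_neg heq) m ((n - m) * u)
  have h2 := J_shift_neg (step_b_neg heq) (m + (n - m) * u * a) ((n - m) * v)
  have h3 : m + (n - m) * u * a + (n - m) * v * b = n := by linear_combination (n - m) * huv
  rw [h3] at h2
  exact h1.trans h2

include heq in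
theorem J_cross (hco : Nat.Coprime a b) (m n : ℤ) :
    Relation.ReflTransGen (DirectlyInteract l) (-(l ^ m)) (l ^ n) :=
  (Relation.ReflTransGen.single (step_cross heq m)).trans (J_pos heq hco (m + a) n)

theorem connect (hl1 : 1 < l) (hco : Nat.Coprime a b) (h : l ^ b - l ^ a = 1) :
    Nondegenerate l := by
  have hl0 : l ≠ 0 := by linarith
  have heq := key_eq hl0 h
  rintro x ⟨mx, hx | hx⟩ y ⟨my, hy | hy⟩ <;> subst hx <;> subst hy
  · exact J_pos heq hco mx my
  · haveI : Std.Symm (DirectlyInteract l) := ⟨fun a b h => di_symm l h⟩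
    exact Std.Symm.symm _ _ (J_cross heq hco my mx)
  · exact J_cross heq hco mx my
  · exact J_neg heq hco mx my

end Connect



theorem exp_eq {l : ℝ} (hl1 : 1 < l) {x : ℝ} {m c : ℤ}
    (h1 : x = l ^ m ∨ x = -(l ^ m)) (h2 : x = l ^ c ∨ x = -(l ^ c)) : m = c := by
  have h0 : (0:ℝ) < l := by linarith
  have hpm := zpow_pos h0 m
  have hpc := zpow_pos h0 c
  rcases h1 with h1 | h1 <;> rcases h2 with h2 | h2 <;> rw [h1] at h2
  · exact zpow_right_injective₀ h0 (ne_of_gt hl1) h2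
  · linarith
  · linarith
  · have h3 : l ^ m = l ^ c := by linarith
    exact zpow_right_injective₀ h0 (ne_of_gt hl1) h3

theorem eq_from_sum_ordered {l : ℝ} (hl1 : 1 < l) {c1 c2 c3 : ℤ} (hc : c3 ≤ c2)
    (h : l ^ c1 = l ^ c2 + l ^ c3) :
    ∃ A B : ℕ, A < B ∧ l ^ B - l ^ A = 1 ∧
      ∀ d : ℤ, d ∣ (A:ℤ) → d ∣ (B:ℤ) → d ∣ c1 - c2 ∧ d ∣ c1 - c3 ∧ d ∣ c2 - c3 := by
  have h0 : (0:ℝ) < l := by linarith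
  have hne : l ≠ 0 := by linarith
  have h21 : c2 < c1 := by
    have := zpow_pos h0 c3
    have hlt : l ^ c2 < l ^ c1 := by linarith
    exact (zpow_lt_zpow_iff_right₀ hl1).mp hlt
  refine ⟨(c2 - c3).toNat, (c1 - c3).toNat, by omega, ?_, ?_⟩
  · have hA : ((c2 - c3).toNat : ℤ) = c2 - c3 := Int.toNat_of_nonneg (by omega)
    have hB : ((c1 - c3).toNat : ℤ) = c1 - c3 := Int.toNat_of_nonneg (by omega)
    have hpos := zpow_pos h0 c3
    have hmul : l ^ (c1 - c3) * l ^ c3 = (l ^ (c2 - c3) + 1) * l ^ c3 := by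
      rw [add_mul, one_mul, ← zpow_add₀ hne, ← zpow_add₀ hne, sub_add_cancel, sub_add_cancel]
      exact h
    have he : l ^ (c1 - c3) = l ^ (c2 - c3) + 1 := mul_right_cancel₀ hpos.ne' hmul
    rw [← zpow_natCast l, ← zpow_natCast l, hA, hB]
    linarith
  · intro d dA dB
    rw [Int.toNat_of_nonneg (show (0:ℤ) ≤ c2 - c3 by omega)] at dA
    rw [Int.toNat_of_nonneg (show (0:ℤ) ≤ c1 - c3 by omega)] at dB
    refine ⟨?_, dB, dA⟩
    have := dvd_sub dB dA
    have e : (c1 - c3) - (c2 - c3) = c1 - c2 := by ring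
    rwa [e] at this

theorem eq_from_sum {l : ℝ} (hl1 : 1 < l) {c1 c2 c3 : ℤ}
    (h : l ^ c1 = l ^ c2 + l ^ c3) :
    ∃ A B : ℕ, A < B ∧ l ^ B - l ^ A = 1 ∧
      ∀ d : ℤ, d ∣ (A:ℤ) → d ∣ (B:ℤ) → d ∣ c1 - c2 ∧ d ∣ c1 - c3 ∧ d ∣ c2 - c3 := by
  rcases le_total c3 c2 with hc | hc
  · exact eq_from_sum_ordered hl1 hc h
  · obtain ⟨A, B, h1, h2, h3⟩ := eq_from_sum_ordered hl1 hc (by linarith : l ^ c1 = l ^ c3 + l ^ c2)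
    refine ⟨A, B, h1, h2, fun d dA dB => ?_⟩
    obtain ⟨d13, d12, d32⟩ := h3 d dA dB
    refine ⟨d12, d13, ?_⟩
    have e : c2 - c3 = -(c3 - c2) := by ring
    rw [e]
    exact dvd_neg.mpr d32

theorem div3 {d i j j' mx my : ℤ} (h12 : d ∣ i - j) (h13 : d ∣ i - j')
    (hmx : mx = i ∨ mx = j ∨ mx = j') (hmy : my = i ∨ my = j ∨ my = j') :
    d ∣ mx - my := by
  have h23 : d ∣ j - j' := by
    have := dvd_sub h13 h12
    have e : (i - j') - (i - j) = j - j' := by ring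
    rwa [e] at this
  have neg : ∀ x y : ℤ, d ∣ x - y → d ∣ y - x := fun x y h => by
    have e : y - x = -(x - y) := by ring
    rw [e]; exact dvd_neg.mpr h
  rcases hmx with rfl | rfl | rfl <;> rcases hmy with rfl | rfl | rfl
  · simp
  · exact h12
  · exact h13
  · exact neg _ _ h12
  · simp
  · exact h23
  · exact neg _ _ h13
  · exact neg _ _ h23
  · simp
theorem step_exponents {l : ℝ} (hl1 : 1 < l) {x y : ℝ} (hxy : DirectlyInteract l x y)
    {mx my : ℤ} (hx : x = l ^ mx ∨ x = -(l ^ mx)) (hy : y = l ^ my ∨ y = -(l ^ my)) :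
    ∃ A B : ℕ, A < B ∧ l ^ B - l ^ A = 1 ∧
      ∀ d : ℤ, d ∣ (A:ℤ) → d ∣ (B:ℤ) → d ∣ mx - my := by
  have h0 : (0:ℝ) < l := by linarith
  obtain ⟨k, p, q, ⟨i, hk⟩, ⟨j, hp⟩, ⟨j', hq⟩, hsum, hxm, hym⟩ := hxy
  have hmx : mx = i ∨ mx = j ∨ mx = j' := by
    rcases hxm with rfl | rfl | rfl
    · exact Or.inl (exp_eq hl1 hx hk)
    · exact Or.inr (Or.inl (exp_eq hl1 hx hp))
    · exact Or.inr (Or.inr (exp_eq hl1 hx hq))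
  have hmy : my = i ∨ my = j ∨ my = j' := by
    rcases hym with rfl | rfl | rfl
    · exact Or.inl (exp_eq hl1 hy hk)
    · exact Or.inr (Or.inl (exp_eq hl1 hy hp))
    · exact Or.inr (Or.inr (exp_eq hl1 hy hq))
  clear hxm hym hx hy
  have hpi := zpow_pos h0 i
  have hpj := zpow_pos h0 j
  have hpj' := zpow_pos h0 j'
  rcases hk with rfl | rfl <;> rcases hp with rfl | rfl <;> rcases hq with rfl | rfl
  -- (+,+,+) : l^i = l^j + l^j'
  · obtain ⟨A, B, h1, h2, h3⟩ := eq_from_sum hl1 hsum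
    exact ⟨A, B, h1, h2, fun d dA dB => by
      obtain ⟨d12, d13, _⟩ := h3 d dA dB
      exact div3 d12 d13 hmx hmy⟩
  -- (+,+,-) : l^i = l^j - l^j'  → l^j = l^i + l^j'
  · obtain ⟨A, B, h1, h2, h3⟩ := eq_from_sum hl1 (show l ^ j = l ^ i + l ^ j' by linarith)
    exact ⟨A, B, h1, h2, fun d dA dB => by
      obtain ⟨dji, djj', _⟩ := h3 d dA dB
      have h12 : d ∣ i - j := by
        have e : i - j = -(j - i) := by ring
        rw [e]; exact dvd_neg.mpr dji
      have h13 : d ∣ i - j' := by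
        have := dvd_sub djj' dji
        have e : (j - j') - (j - i) = i - j' := by ring
        rwa [e] at this
      exact div3 h12 h13 hmx hmy⟩
  -- (+,-,+) : l^i = -l^j + l^j' → l^j' = l^i + l^j
  · obtain ⟨A, B, h1, h2, h3⟩ := eq_from_sum hl1 (show l ^ j' = l ^ i + l ^ j by linarith)
    exact ⟨A, B, h1, h2, fun d dA dB => by
      obtain ⟨dj'i, dj'j, _⟩ := h3 d dA dB
      have h13 : d ∣ i - j' := by
        have e : i - j' = -(j' - i) := by ring
        rw [e]; exact dvd_neg.mpr dj'i
      have h12 : d ∣ i - j := by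
        have := dvd_sub dj'j dj'i
        have e : (j' - j) - (j' - i) = i - j := by ring
        rwa [e] at this
      exact div3 h12 h13 hmx hmy⟩
  -- (+,-,-) : impossible
  · exfalso; nlinarith
  -- (-,+,+) : impossible
  · exfalso; nlinarith
  -- (-,+,-) : -l^i = l^j - l^j' → l^j' = l^i + l^j
  · obtain ⟨A, B, h1, h2, h3⟩ := eq_from_sum hl1 (show l ^ j' = l ^ i + l ^ j by linarith)
    exact ⟨A, B, h1, h2, fun d dA dB => by
      obtain ⟨dj'i, dj'j, _⟩ := h3 d dA dB
      have h13 : d ∣ i - j' := by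
        have e : i - j' = -(j' - i) := by ring
        rw [e]; exact dvd_neg.mpr dj'i
      have h12 : d ∣ i - j := by
        have := dvd_sub dj'j dj'i
        have e : (j' - j) - (j' - i) = i - j := by ring
        rwa [e] at this
      exact div3 h12 h13 hmx hmy⟩
  -- (-,-,+) : -l^i = -l^j + l^j' → l^j = l^i + l^j'
  · obtain ⟨A, B, h1, h2, h3⟩ := eq_from_sum hl1 (show l ^ j = l ^ i + l ^ j' by linarith)
    exact ⟨A, B, h1, h2, fun d dA dB => by
      obtain ⟨dji, djj', _⟩ := h3 d dA dB
      have h12 : d ∣ i - j := by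
        have e : i - j = -(j - i) := by ring
        rw [e]; exact dvd_neg.mpr dji
      have h13 : d ∣ i - j' := by
        have := dvd_sub djj' dji
        have e : (j - j') - (j - i) = i - j' := by ring
        rwa [e] at this
      exact div3 h12 h13 hmx hmy⟩
  -- (-,-,-) : l^i = l^j + l^j'
  · obtain ⟨A, B, h1, h2, h3⟩ := eq_from_sum hl1 (show l ^ i = l ^ j + l ^ j' by linarith)
    exact ⟨A, B, h1, h2, fun d dA dB => by
      obtain ⟨d12, d13, _⟩ := h3 d dA dB
      exact div3 d12 d13 hmx hmy⟩


theorem sigma_unique {l s : ℝ} (hl1 : 1 < l) (hs1 : 1 < s) (hl3 : l ^ 3 - l - 1 = 0)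
    (hs : s ^ 3 - s - 1 = 0) : l = s := by
  have h : (l - s) * (l ^ 2 + l * s + s ^ 2 - 1) = 0 := by linear_combination hl3 - hs
  have h2 : 0 < l ^ 2 + l * s + s ^ 2 - 1 := by nlinarith
  rcases mul_eq_zero.mp h with h3 | h3
  · linarith [sub_eq_zero.mp h3]
  · linarith

theorem locate {l : ℝ} (hl : (1.05:ℝ) ≤ l) {A B m : ℕ} (hmem : (A, B, m) ∈ LL)
    (heq : l ^ B - l ^ A = 1) : (m:ℝ) / 10 ^ 7 < l ∧ l < ((m:ℝ) + 1) / 10 ^ 7 := by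
  obtain ⟨hAB, _, hm7, _, hlow, hhigh⟩ := F2' hmem
  have hl1 : (1:ℝ) ≤ l := le_trans (by norm_num) hl
  have hd : (0:ℕ) < 10 ^ 7 := by norm_num
  have hlow' : m ^ B < (10 ^ 7) ^ B + m ^ A * (10 ^ 7) ^ (B - A) := by
    rwa [pow_mul, pow_mul] at hlow
  have hhigh' : (10 ^ 7) ^ B + (m + 1) ^ A * (10 ^ 7) ^ (B - A) < (m + 1) ^ B := by
    rwa [pow_mul, pow_mul] at hhigh
  have h1 := cast_lt_one hd hAB hlow'
  have h2 := cast_one_lt hd hAB hhigh'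
  have hcast : ((10 ^ 7 : ℕ) : ℝ) = 10 ^ 7 := by push_cast; ring
  rw [hcast] at h1 h2
  have hm7' : ((10:ℝ)) ^ 7 ≤ (m:ℝ) := by exact_mod_cast hm7
  have hc1 : (((m:ℕ) + 1 : ℕ) : ℝ) = (m:ℝ) + 1 := by push_cast; ring
  rw [hc1] at h2
  constructor
  · by_contra hcon
    push_neg at hcon
    have := pow_sub_mono hl1 hcon hAB
    rw [heq] at this
    linarith
  · by_contra hcon
    push_neg at hcon
    have hm1 : (1:ℝ) ≤ ((m:ℝ) + 1) / 10 ^ 7 := by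
      rw [le_div_iff₀ (by norm_num)]
      linarith
    have := pow_sub_mono hm1 hcon hAB
    rw [heq] at this
    linarith

end NondegAux

open NondegAux in
/-- Classification of nondegenerate logarithmic lattices with spacing `λ ≥ 1.05`:
nondegeneracy holds iff (i) `λ = 2`, or (ii) `λ = σ` the plastic number, or
(iii) `λ^b − λ^a = 1` for mutually prime `0 ≤ a < b ≤ 62` with `(a,b) ∉ {(1,3),(4,5)}`. -/
theorem nondegenerate_lattice_classification (l : ℝ) (hl : (1.05 : ℝ) ≤ l)
    (σ : ℝ) (hσ1 : 1 < σ) (hσ : σ ^ 3 - σ - 1 = 0) :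
    Nondegenerate l ↔
      l = 2 ∨ l = σ ∨
        ∃ a b : ℕ, Nat.Coprime a b ∧ a < b ∧ b ≤ 62 ∧
          ¬(a = 1 ∧ b = 3) ∧ ¬(a = 4 ∧ b = 5) ∧ l ^ b - l ^ a = 1 := by
  have hl1 : (1:ℝ) < l := lt_of_lt_of_le (by norm_num) hl
  constructor
  · intro hnd
    by_cases hex : ∃ A B : ℕ, A < B ∧ Nat.Coprime A B ∧ l ^ B - l ^ A = 1
    · obtain ⟨A, B, hAB, hco, heq⟩ := hex
      have hB62 : B ≤ 62 := Ble62 hl hAB heq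
      by_cases h13 : A = 1 ∧ B = 3
      · right; left
        obtain ⟨rfl, rfl⟩ := h13
        exact sigma_unique hl1 hσ1 (by rw [pow_one] at heq; linarith) hσ
      · by_cases h45 : A = 4 ∧ B = 5
        · right; left
          obtain ⟨rfl, rfl⟩ := h45
          have hfac : (l ^ 3 - l - 1) * (l ^ 2 - l + 1) = 0 := by linear_combination heq
          have hq : 0 < l ^ 2 - l + 1 := by nlinarith
          rcases mul_eq_zero.mp hfac with h3 | h3
          · exact sigma_unique hl1 hσ1 h3 hσ
          · linarith
        · exact Or.inr (Or.inr ⟨A, B, hco, hAB, hB62, h13, h45, heq⟩)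
    · exfalso
      have h1mem : (1:ℝ) ∈ logLattice l := ⟨0, Or.inl (zpow_zero l).symm⟩
      have hlmem : l ∈ logLattice l := ⟨1, Or.inl (zpow_one l).symm⟩
      have hchain := hnd 1 h1mem l hlmem
      have entry : ∀ {A B : ℕ}, A < B → l ^ B - l ^ A = 1 → ∃ m, (A, B, m) ∈ LL := by
        intro A B hAB heq
        have hB : B < 63 := by have := Ble62 hl hAB heq; omega
        have hg0 : Nat.gcd A B ≠ 0 := by
          intro h0
          have := Nat.eq_zero_of_gcd_eq_zero_right h0
          omega
        have hg1 : Nat.gcd A B ≠ 1 := fun hg => hex ⟨A, B, hAB, hg, heq⟩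
        have hg2 : 2 ≤ Nat.gcd A B := by omega
        rcases F1' A B hg2 hB hAB with hbig | hm
        · exfalso
          have hbig' : 100 ^ B + 105 ^ A * 100 ^ (B - A) < 105 ^ B := hbig
          have hr : 1 < ((105:ℝ) / 100) ^ B - ((105:ℝ) / 100) ^ A := by
            have := cast_one_lt (m := 105) (d := 100) (by norm_num) hAB hbig'
            have hc : ((105:ℕ):ℝ) / ((100:ℕ):ℝ) = (105:ℝ) / 100 := by norm_num
            rwa [hc] at this
          have h105 : ((105:ℝ) / 100) = 1.05 := by norm_num
          rw [h105] at hr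
          have := pow_sub_mono (x := (1.05:ℝ)) (by norm_num) hl hAB
          rw [heq] at this
          linarith
        · exact hm
      rcases Relation.ReflTransGen.cases_head hchain with heq1 | ⟨c, hstep, _⟩
      · exact absurd heq1 (by linarith)
      obtain ⟨⟨mx0, hx0⟩, ⟨my0, hy0⟩⟩ := di_rep hstep
      obtain ⟨A1, B1, hAB1, heqn1, _⟩ := step_exponents hl1 hstep hx0 hy0
      obtain ⟨m1, hm1⟩ := entry hAB1 heqn1
      have hdd2 : 2 ≤ Nat.gcd A1 B1 := (F2' hm1).2.2.2.1
      set P := (Nat.gcd A1 B1).minFac with hP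
      have hPp : P.Prime := Nat.minFac_prime (by omega)
      have key : ∀ A B : ℕ, A < B → l ^ B - l ^ A = 1 → (P:ℤ) ∣ (A:ℤ) ∧ (P:ℤ) ∣ (B:ℤ) := by
        intro A B hAB heq
        obtain ⟨m, hm⟩ := entry hAB heq
        have hgcd : Nat.gcd A B = Nat.gcd A1 B1 := by
          rcases F3' hm hm1 with h | h | h
          · exact h
          · exfalso
            obtain ⟨_, hup⟩ := locate hl hm heq
            obtain ⟨hdown, _⟩ := locate hl hm1 heqn1
            have hle : ((m:ℝ) + 1) / 10 ^ 7 ≤ (m1:ℝ) / 10 ^ 7 := by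
              have hc : ((m:ℝ) + 1) ≤ (m1:ℝ) := by exact_mod_cast h
              linarith
            linarith
          · exfalso
            obtain ⟨hdown, _⟩ := locate hl hm heq
            obtain ⟨_, hup⟩ := locate hl hm1 heqn1
            have hle : ((m1:ℝ) + 1) / 10 ^ 7 ≤ (m:ℝ) / 10 ^ 7 := by
              have hc : ((m1:ℝ) + 1) ≤ (m:ℝ) := by exact_mod_cast h
              linarith
            linarith
        have hPA : P ∣ A := dvd_trans (Nat.minFac_dvd _) (hgcd ▸ Nat.gcd_dvd_left A B)
        have hPB : P ∣ B := dvd_trans (Nat.minFac_dvd _) (hgcd ▸ Nat.gcd_dvd_right A B)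
        exact ⟨Int.natCast_dvd_natCast.mpr hPA, Int.natCast_dvd_natCast.mpr hPB⟩
      have inv : ∀ x y : ℝ, Relation.ReflTransGen (DirectlyInteract l) x y →
          ∀ mx my : ℤ, (x = l ^ mx ∨ x = -(l ^ mx)) → (y = l ^ my ∨ y = -(l ^ my)) →
          (P:ℤ) ∣ mx - my := by
        intro x y h
        induction h with
        | refl =>
            intro mx my hx hy
            rw [exp_eq hl1 hx hy]
            simp
        | @tail b c hxb hbc ih =>
            intro mx my hx hy
            obtain ⟨⟨mb, hb⟩, _⟩ := di_rep hbc
            have hpart1 := ih mx mb hx hb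
            obtain ⟨A, B, hAB, heqn, hdvd⟩ := step_exponents hl1 hbc hb hy
            obtain ⟨dA, dB⟩ := key A B hAB heqn
            have hpart2 := hdvd (P:ℤ) dA dB
            have e : mx - my = (mx - mb) + (mb - my) := by ring
            rw [e]
            exact dvd_add hpart1 hpart2
      have hdvd1 := inv 1 l hchain 0 1 (Or.inl (zpow_zero l).symm) (Or.inl (zpow_one l).symm)
      have hdvd1' : (P:ℤ) ∣ 1 := by
        have e : (0:ℤ) - 1 = -1 := by ring
        rw [e] at hdvd1
        exact (dvd_neg).mp hdvd1
      have hle1 := Int.le_of_dvd (by norm_num) hdvd1'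
      have h2P : (2:ℤ) ≤ (P:ℤ) := by exact_mod_cast hPp.two_le
      linarith
  · rintro (rfl | rfl | ⟨a, b, hco, hab, hb62, _, _, heq⟩)
    · exact connect (by norm_num) (a := 0) (b := 1) (by decide) (by norm_num)
    · exact connect hσ1 (a := 1) (b := 3) (by decide) (by rw [pow_one]; linarith)
    · exact connect hl1 hco heq
end

section
/- Let a, a′, b be integers with 0 ≤ a′ < a < b, and let x, y > 1 be real numbers with x^b − x^{a′} − 1 = 0 and y^b − y^a − 1 = 0. Then x < y. In other words, for fixed b, the unique root greater than 1 of the trinomial x^b − x^a − 1 is strictly increasing in a. -/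
/-- For fixed `b`, the unique root `> 1` of `x^b − x^a − 1` is strictly increasing in `a`:
if `0 ≤ a′ < a < b`, `x, y > 1`, `x^b − x^{a′} − 1 = 0` and `y^b − y^a − 1 = 0`, then `x < y`. -/
theorem trinomial_root_monotone (a a' b : ℕ) (ha : a' < a) (hb : a < b)
    (x y : ℝ) (hx : 1 < x) (hy : 1 < y)
    (hxe : x ^ b - x ^ a' - 1 = 0) (hye : y ^ b - y ^ a - 1 = 0) :
    x < y := by
  by_contra h
  push_neg at h  -- y ≤ x
  -- x^b - x^a - 1 < 0
  have hxa : x ^ a' < x ^ a := pow_lt_pow_right₀ hx ha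
  have hneg : x ^ b - x ^ a < 1 := by linarith
  -- factorization
  have hba : a + (b - a) = b := by omega
  have hyx : y ^ a ≤ x ^ a := pow_le_pow_left₀ (by linarith) h a
  have hyx2 : y ^ (b - a) ≤ x ^ (b - a) := pow_le_pow_left₀ (by linarith) h _
  have hy1 : (1:ℝ) ≤ y ^ (b - a) := one_le_pow₀ (le_of_lt hy)
  have hy0 : (0:ℝ) ≤ y ^ a := by positivity
  have key : y ^ b - y ^ a ≤ x ^ b - x ^ a := by
    have hxfac : x ^ b = x ^ a * x ^ (b - a) := by rw [← pow_add, hba]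
    have hyfac : y ^ b = y ^ a * y ^ (b - a) := by rw [← pow_add, hba]
    rw [hxfac, hyfac]
    have : y ^ a * (y ^ (b - a) - 1) ≤ x ^ a * (x ^ (b - a) - 1) :=
      mul_le_mul hyx (by linarith) (by linarith) (by positivity)
    nlinarith
  linarith
end

section
/- Let a, b be integers with 0 ≤ a < b and b ≥ 63. If x > 1 is a real number satisfying x^b − x^a − 1 = 0, then x < 1.05. -/
/-- For integers `0 ≤ a < b` with `b ≥ 63`, any root `x > 1` of `x^b − x^a − 1 = 0`
satisfies `x < 1.05`. -/
theorem trinomial_root_lt (a b : ℕ) (hab : a < b) (hb : 63 ≤ b)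
    (x : ℝ) (hx : 1 < x) (heq : x ^ b - x ^ a - 1 = 0) :
    x < 1.05 := by
  by_contra h
  push_neg at h
  have h1 : x ^ a ≤ x ^ (b-1) := pow_le_pow_right₀ hx.le (by omega)
  have h2 : (1.05:ℝ)^62 ≤ x^(b-1) := by
    calc (1.05:ℝ)^62 ≤ x^62 := pow_le_pow_left₀ (by norm_num) h 62
      _ ≤ x^(b-1) := pow_le_pow_right₀ hx.le (by omega)
  have h3 : x ^ b = x ^ (b-1) * x := by
    rw [← pow_succ]; congr 1; omega
  have key : (1.05:ℝ)^62 * 0.05 > 1 := by norm_num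
  nlinarith [mul_le_mul_of_nonneg_right h2 (by linarith : (0:ℝ) ≤ x - 1),
    mul_le_mul_of_nonneg_left (by linarith : (0.05:ℝ) ≤ x - 1)
      (by positivity : (0:ℝ) ≤ (1.05:ℝ)^62)]
end

section
/- Let Λ = {2^n : n ∈ ℤ} ∪ {−2^n : n ∈ ℤ} and let c₁, c₂, c₃ ∈ ℝ. For finitely supported functions f, g : Λ → ℂ define (f ∗ g)(k) = c₁ f(2k)g(−k) + c₂ f(−k)g(2k) + c₃ f(k/2)g(k/2). Suppose that ∗ is commutative, i.e. f ∗ g = g ∗ f for all finitely supported f, g, and associative in average, i.e. Σ_{k∈Λ} (f ∗ g)(k) · conj(h(k)) = Σ_{k∈Λ} f(k) · conj((g ∗ h)(k)) for all finitely supported f, g, h satisfying the reality condition. Then c₁ = c₂ = c₃. -/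
/-- The reality condition `f(−k) = conj(f(k))`. -/
def RealityCond (f : ℝ → ℂ) : Prop := ∀ k : ℝ, f (-k) = star (f k)

/-- The candidate product on the lattice `Λ(2)` with coefficients `c₁, c₂, c₃`:
`(f ∗ g)(k) = c₁ f(2k)g(−k) + c₂ f(−k)g(2k) + c₃ f(k/2)g(k/2)`. -/
noncomputable def prodTwo (c₁ c₂ c₃ : ℝ) (f g : ℝ → ℂ) (k : ℝ) : ℂ :=
  (c₁ : ℂ) * f (2 * k) * g (-k) + (c₂ : ℂ) * f (-k) * g (2 * k) +
    (c₃ : ℂ) * f (k / 2) * g (k / 2)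

open Function in
/-- Delta function at `±a`. -/
noncomputable def delta (a : ℝ) : ℝ → ℂ := fun x => if x = a ∨ x = -a then 1 else 0

lemma delta_supp (a : ℝ) : Function.support (delta a) ⊆ ({a, -a} : Set ℝ) := by
  intro x hx
  simp only [Function.mem_support, delta, ne_eq, ite_eq_right_iff, not_forall] at hx
  rcases hx with ⟨h, -⟩
  simpa [Set.mem_insert_iff] using h

lemma delta_finite (a : ℝ) : (Function.support (delta a)).Finite :=
  Set.Finite.subset ((Set.finite_singleton (-a)).insert a) (delta_supp a)

lemma delta_real (a : ℝ) : RealityCond (delta a) := by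
  intro k
  simp only [delta]
  by_cases h : k = a ∨ k = -a
  · have h' : -k = a ∨ -k = -a := by
      rcases h with h | h
      · right; rw [h]
      · left; rw [h]; ring
    rw [if_pos h', if_pos h, star_one]
  · have h' : ¬(-k = a ∨ -k = -a) := by
      intro hc
      apply h
      rcases hc with hc | hc
      · right; linarith
      · left; linarith
    rw [if_neg h', if_neg h, star_zero]

lemma delta_one_lattice : Function.support (delta 1) ⊆ logLattice 2 := by
  intro x hx
  rcases delta_supp 1 hx with h | h
  · exact ⟨0, Or.inl (by simpa using h)⟩
  · exact ⟨0, Or.inr (by simpa using h)⟩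

lemma delta_two_lattice : Function.support (delta 2) ⊆ logLattice 2 := by
  intro x hx
  rcases delta_supp 2 hx with h | h
  · exact ⟨1, Or.inl (by simpa using h)⟩
  · exact ⟨1, Or.inr (by simpa using h)⟩

lemma finsum_latt {F : ℝ → ℂ} {a : ℝ} (ha : a ≠ 0) (haL : a ∈ logLattice 2)
    (hnaL : -a ∈ logLattice 2)
    (hF : Function.support F ⊆ ({a, -a} : Set ℝ)) :
    ∑ᶠ k ∈ logLattice 2, F k = F a + F (-a) := by
  classical
  have hne : a ≠ -a := by intro h; apply ha; linarith
  have h1 : ∑ᶠ k ∈ logLattice 2, F k = ∑ k ∈ ({a, -a} : Finset ℝ), F k := by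
    apply finsum_mem_eq_sum_of_inter_support_eq
    have hsub : Function.support F ⊆ logLattice 2 := by
      intro x hx
      rcases hF hx with h | h <;> rw [h]
      exacts [haL, hnaL]
    ext x
    simp only [Set.mem_inter_iff, Finset.coe_insert, Finset.coe_singleton]
    constructor
    · rintro ⟨-, hx⟩; exact ⟨hF hx, hx⟩
    · rintro ⟨-, hx⟩; exact ⟨hsub hx, hx⟩
  rw [h1, Finset.sum_pair hne]

/-- If the product `prodTwo c₁ c₂ c₃` on the lattice `Λ(2)` is commutative and
associative in average, then `c₁ = c₂ = c₃`. -/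
theorem product_coefficients_equal (c₁ c₂ c₃ : ℝ)
    (hcomm : ∀ f g : ℝ → ℂ,
      (Function.support f).Finite → (Function.support g).Finite →
      Function.support f ⊆ logLattice 2 → Function.support g ⊆ logLattice 2 →
      prodTwo c₁ c₂ c₃ f g = prodTwo c₁ c₂ c₃ g f)
    (hassoc : ∀ f g h : ℝ → ℂ,
      (Function.support f).Finite → (Function.support g).Finite →
      (Function.support h).Finite →
      Function.support f ⊆ logLattice 2 → Function.support g ⊆ logLattice 2 →
      Function.support h ⊆ logLattice 2 →
      RealityCond f → RealityCond g → RealityCond h →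
      ∑ᶠ k ∈ logLattice 2, prodTwo c₁ c₂ c₃ f g k * star (h k) =
        ∑ᶠ k ∈ logLattice 2, f k * star (prodTwo c₁ c₂ c₃ g h k)) :
    c₁ = c₂ ∧ c₂ = c₃ := by
  have h1L : (1 : ℝ) ∈ logLattice 2 := ⟨0, Or.inl (by norm_num)⟩
  have hn1L : (-1 : ℝ) ∈ logLattice 2 := ⟨0, Or.inr (by norm_num)⟩
  have h2L : (2 : ℝ) ∈ logLattice 2 := ⟨1, Or.inl (by norm_num)⟩
  have hn2L : (-2 : ℝ) ∈ logLattice 2 := ⟨1, Or.inr (by norm_num)⟩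
  -- First relation: f = δ₁, g = δ₂, h = δ₁ gives c₂ = c₁.
  have key1 := hassoc (delta 1) (delta 2) (delta 1) (delta_finite 1) (delta_finite 2)
    (delta_finite 1) delta_one_lattice delta_two_lattice delta_one_lattice
    (delta_real 1) (delta_real 2) (delta_real 1)
  have hL1 : Function.support (fun k => prodTwo c₁ c₂ c₃ (delta 1) (delta 2) k * star (delta 1 k))
      ⊆ ({(1 : ℝ), -1} : Set ℝ) := by
    intro x hx
    have hx' : delta 1 x ≠ 0 := by
      intro h; apply hx; simp [h]
    exact delta_supp 1 hx'
  have hR1 : Function.support (fun k => delta 1 k * star (prodTwo c₁ c₂ c₃ (delta 2) (delta 1) k))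
      ⊆ ({(1 : ℝ), -1} : Set ℝ) := by
    intro x hx
    have hx' : delta 1 x ≠ 0 := by
      intro h; apply hx; simp [h]
    exact delta_supp 1 hx'
  rw [finsum_latt one_ne_zero h1L hn1L hL1, finsum_latt one_ne_zero h1L hn1L hR1] at key1
  have e1 : (c₂ : ℂ) + c₂ = c₁ + c₁ := by
    have := key1
    norm_num [prodTwo, delta] at this ⊢
    convert this using 2 <;> norm_num
  -- Second relation: f = δ₁, g = δ₁, h = δ₂ gives c₃ = c₂.
  have key2 := hassoc (delta 1) (delta 1) (delta 2) (delta_finite 1) (delta_finite 1)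
    (delta_finite 2) delta_one_lattice delta_one_lattice delta_two_lattice
    (delta_real 1) (delta_real 1) (delta_real 2)
  have hL2 : Function.support (fun k => prodTwo c₁ c₂ c₃ (delta 1) (delta 1) k * star (delta 2 k))
      ⊆ ({(2 : ℝ), -2} : Set ℝ) := by
    intro x hx
    have hx' : delta 2 x ≠ 0 := by
      intro h; apply hx; simp [h]
    exact delta_supp 2 hx'
  have hR2 : Function.support (fun k => delta 1 k * star (prodTwo c₁ c₂ c₃ (delta 1) (delta 2) k))
      ⊆ ({(1 : ℝ), -1} : Set ℝ) := by
    intro x hx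
    have hx' : delta 1 x ≠ 0 := by
      intro h; apply hx; simp [h]
    exact delta_supp 1 hx'
  rw [finsum_latt two_ne_zero h2L hn2L hL2, finsum_latt one_ne_zero h1L hn1L hR2] at key2
  have e2 : (c₃ : ℂ) + c₃ = c₂ + c₂ := by
    have := key2
    norm_num [prodTwo, delta] at this ⊢
    convert this using 2 <;> norm_num
  have r1 : c₂ = c₁ := by
    have : (c₂ : ℂ) = c₁ := by linear_combination e1 / 2
    exact_mod_cast this
  have r2 : c₃ = c₂ := by
    have : (c₃ : ℂ) = c₂ := by linear_combination e2 / 2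
    exact_mod_cast this
  exact ⟨r1.symm, r2.symm⟩
end

section
/- Let φ = (1+√5)/2 and Λ = Λ(φ). The convolution product (f ∗ g)(k) = Σ_{p,q ∈ Λ, p+q=k} f(p)g(q) on finitely supported functions Λ → ℂ is not associative: for p = φ⁴, q = −φ³, r = −φ, and δ_x the indicator function of the point x ∈ Λ, one has (δ_p ∗ δ_q) ∗ δ_r = δ_1 whereas δ_p ∗ (δ_q ∗ δ_r) = 0. In particular there exist finitely supported f, g, h : Λ → ℂ with (f ∗ g) ∗ h ≠ f ∗ (g ∗ h). -/
open scoped Classical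

/-- The convolution product on a lattice `Λ ⊆ ℝ`:
`(f ∗ g)(k) = Σ_{p,q ∈ Λ, p+q=k} f(p) g(q)`. -/
noncomputable def latticeConv (Λ : Set ℝ) (f g : ℝ → ℂ) (k : ℝ) : ℂ :=
  ∑ᶠ p ∈ Λ, ∑ᶠ q ∈ Λ, if p + q = k then f p * g q else 0

/-- The delta function at a point `x`. -/
noncomputable def deltaFn (x : ℝ) : ℝ → ℂ := fun k => if k = x then 1 else 0

lemma finsum_mem_eq_single' {s : Set ℝ} {f : ℝ → ℂ} (a : ℝ) (ha : a ∈ s)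
    (h : ∀ x ∈ s, x ≠ a → f x = 0) : (∑ᶠ x ∈ s, f x) = f a := by
  rw [finsum_mem_def, finsum_eq_single _ a, Set.indicator_of_mem ha]
  intro x hx
  by_cases hxs : x ∈ s
  · rw [Set.indicator_of_mem hxs]; exact h x hxs hx
  · exact Set.indicator_of_notMem hxs _

lemma finsum_mem_zero' {s : Set ℝ} {f : ℝ → ℂ} (h : ∀ x ∈ s, f x = 0) :
    (∑ᶠ x ∈ s, f x) = 0 := by
  rw [finsum_mem_def]
  apply finsum_eq_zero_of_forall_eq_zero
  intro x
  by_cases hxs : x ∈ s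
  · rw [Set.indicator_of_mem hxs]; exact h x hxs
  · exact Set.indicator_of_notMem hxs _

lemma delta_conv_delta {Λ : Set ℝ} {a b : ℝ} (ha : a ∈ Λ) (hb : b ∈ Λ) :
    latticeConv Λ (deltaFn a) (deltaFn b) = deltaFn (a + b) := by
  funext k
  unfold latticeConv deltaFn
  rw [finsum_mem_eq_single' a ha]
  · rw [finsum_mem_eq_single' b hb]
    · by_cases h : a + b = k
      · rw [if_pos h, if_pos rfl, if_pos rfl, mul_one, if_pos h.symm]
      · rw [if_neg h, if_neg (fun hk => h hk.symm)]
    · intro x _ hx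
      rw [if_neg hx, mul_zero, ite_self]
  · intro x _ hx
    rw [finsum_mem_zero']
    intro q _
    rw [if_neg hx, zero_mul, ite_self]

lemma conv_right_zero_on {Λ : Set ℝ} {f h : ℝ → ℂ} (hh : ∀ q ∈ Λ, h q = 0) :
    latticeConv Λ f h = 0 := by
  funext k
  unfold latticeConv
  rw [finsum_mem_zero']
  · rfl
  intro p _
  apply finsum_mem_zero'
  intro q hq
  rw [hh q hq, mul_zero, ite_self]
/-- The convolution product on the golden-mean lattice is not associative:
with `p = φ⁴`, `q = −φ³`, `r = −φ` one has `(δ_p ∗ δ_q) ∗ δ_r = δ_1` while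
`δ_p ∗ (δ_q ∗ δ_r) = 0`; in particular there exist finitely supported
`f, g, h` supported on the lattice with `(f ∗ g) ∗ h ≠ f ∗ (g ∗ h)`. -/
theorem conv_not_associative (φ : ℝ) (hφ : φ = (1 + Real.sqrt 5) / 2) :
    (latticeConv (logLattice φ) (latticeConv (logLattice φ) (deltaFn (φ ^ 4)) (deltaFn (-(φ ^ 3)))) (deltaFn (-φ))
        = deltaFn 1) ∧
    (latticeConv (logLattice φ) (deltaFn (φ ^ 4)) (latticeConv (logLattice φ) (deltaFn (-(φ ^ 3))) (deltaFn (-φ)))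
        = 0) ∧
    ∃ f g h : ℝ → ℂ,
      (Function.support f).Finite ∧ (Function.support g).Finite ∧
      (Function.support h).Finite ∧
      Function.support f ⊆ logLattice φ ∧ Function.support g ⊆ logLattice φ ∧
      Function.support h ⊆ logLattice φ ∧
      latticeConv (logLattice φ) (latticeConv (logLattice φ) f g) h ≠
        latticeConv (logLattice φ) f (latticeConv (logLattice φ) g h) := by
  have h5 : Real.sqrt 5 ^ 2 = 5 := Real.sq_sqrt (by norm_num)
  have h5' : (1:ℝ) < Real.sqrt 5 := by nlinarith [Real.sqrt_nonneg 5]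
  have hφ1 : 1 < φ := by rw [hφ]; linarith
  have hφpos : 0 < φ := by linarith
  have hφ2 : φ ^ 2 = φ + 1 := by rw [hφ]; nlinarith
  -- memberships
  have mem_pow : ∀ n : ℤ, φ ^ n ∈ logLattice φ := fun n => ⟨n, Or.inl rfl⟩
  have mem_neg_pow : ∀ n : ℤ, -(φ ^ n) ∈ logLattice φ := fun n => ⟨n, Or.inr rfl⟩
  have h4 : φ ^ 4 ∈ logLattice φ := by
    have := mem_pow 4; rwa [zpow_ofNat] at this
  have h3 : -(φ ^ 3) ∈ logLattice φ := by
    have := mem_neg_pow 3; rwa [zpow_ofNat] at this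
  have h1m : -φ ∈ logLattice φ := by
    have := mem_neg_pow 1; rwa [zpow_one] at this
  have h2 : φ ^ 2 ∈ logLattice φ := by
    have := mem_pow 2; rwa [zpow_ofNat] at this
  have key : φ ^ 4 + -(φ ^ 3) = φ ^ 2 := by nlinarith
  have key2 : φ ^ 2 + -φ = 1 := by nlinarith
  -- nonmembership of -(φ^3 + φ)
  have hnot : -(φ ^ 3) + -φ ∉ logLattice φ := by
    rintro ⟨n, hn | hn⟩
    · have : (0:ℝ) < φ ^ n := zpow_pos hφpos n
      nlinarith
    · have heq : φ ^ 3 + φ = φ ^ n := by linarith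
      have hlt1 : (φ:ℝ) ^ (3:ℤ) < φ ^ n := by
        rw [← heq, zpow_ofNat]; nlinarith
      have hlt2 : (φ:ℝ) ^ n < φ ^ (4:ℤ) := by
        rw [← heq, zpow_ofNat]; nlinarith
      have h3n : (3:ℤ) < n := (zpow_lt_zpow_iff_right₀ hφ1).mp hlt1
      have hn4 : n < (4:ℤ) := (zpow_lt_zpow_iff_right₀ hφ1).mp hlt2
      omega
  have part1 : latticeConv (logLattice φ)
      (latticeConv (logLattice φ) (deltaFn (φ ^ 4)) (deltaFn (-(φ ^ 3)))) (deltaFn (-φ))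
      = deltaFn 1 := by
    rw [delta_conv_delta h4 h3, key, delta_conv_delta h2 h1m, key2]
  have part2 : latticeConv (logLattice φ) (deltaFn (φ ^ 4))
      (latticeConv (logLattice φ) (deltaFn (-(φ ^ 3))) (deltaFn (-φ))) = 0 := by
    rw [delta_conv_delta h3 h1m]
    apply conv_right_zero_on
    intro q hq
    unfold deltaFn
    rw [if_neg]
    rintro rfl
    exact hnot hq
  have supp_delta : ∀ x : ℝ, Function.support (deltaFn x) = {x} := by
    intro x
    ext k
    simp [deltaFn, Function.mem_support]
  refine ⟨part1, part2, deltaFn (φ ^ 4), deltaFn (-(φ ^ 3)), deltaFn (-φ), ?_, ?_, ?_, ?_, ?_, ?_, ?_⟩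
  · rw [supp_delta]; exact Set.finite_singleton _
  · rw [supp_delta]; exact Set.finite_singleton _
  · rw [supp_delta]; exact Set.finite_singleton _
  · rw [supp_delta]; exact Set.singleton_subset_iff.mpr h4
  · rw [supp_delta]; exact Set.singleton_subset_iff.mpr h3
  · rw [supp_delta]; exact Set.singleton_subset_iff.mpr h1m
  · rw [part1, part2]
    intro hcontra
    have := congrFun hcontra 1
    simp [deltaFn] at this
end

section
/- Let φ = (1+√5)/2 and Λ = Λ(φ), and let m ≥ 1 be an integer. There exists a constant C > 0 (independent of f and g) such that for all finitely supported f, g : Λ → ℂ, ‖f ∗ g‖_{h^m} ≤ C·( ‖f‖_{h^m}·‖g‖_{ℓ^∞} + ‖Df‖_{ℓ^∞}·‖g‖_{h^{m−1}} ), where ∗ is the convolution on Λ, ‖f‖_{h^m} = ( Σ_{k∈Λ} |k|^{2m} |f(k)|² )^{1/2}, ‖g‖_{ℓ^∞} = sup_{k∈Λ} |g(k)|, and ‖Df‖_{ℓ^∞} = sup_{k∈Λ} |k|·|f(k)|. -/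
open scoped Classical
open Real

/-- The homogeneous Sobolev norm `‖f‖_{h^m} = (Σ_{k∈Λ} |k|^{2m} |f(k)|²)^{1/2}`. -/
noncomputable def hNorm (Λ : Set ℝ) (m : ℕ) (f : ℝ → ℂ) : ℝ :=
  Real.sqrt (∑ᶠ k ∈ Λ, |k| ^ (2 * m) * ‖f k‖ ^ 2)

/-- The `ℓ^∞` norm `‖f‖_{ℓ^∞} = sup_{k∈Λ} |f(k)|`. -/
noncomputable def linfNorm (Λ : Set ℝ) (f : ℝ → ℂ) : ℝ := ⨆ k ∈ Λ, ‖f k‖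

/-- The `ℓ^∞` norm of `Df`: `‖Df‖_{ℓ^∞} = sup_{k∈Λ} |k| |f(k)|`. -/
noncomputable def DlinfNorm (Λ : Set ℝ) (f : ℝ → ℂ) : ℝ := ⨆ k ∈ Λ, |k| * ‖f k‖

/-! ### Golden ratio arithmetic -/

lemma gold_inv' : goldenRatio⁻¹ = goldenRatio - 1 :=
  inv_eq_of_mul_eq_one_right (by linear_combination goldenRatio_sq)

lemma gold_gt : (3/2 : ℝ) < goldenRatio := by
  have h5 : (2:ℝ) < √5 := by
    nlinarith [Real.sq_sqrt (by norm_num : (0:ℝ) ≤ 5), Real.sqrt_nonneg 5]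
  have : goldenRatio = (1 + √5)/2 := rfl
  linarith

lemma gold_zpow_two : goldenRatio ^ (2:ℤ) = goldenRatio + 1 := by
  rw [show (2:ℤ) = ((2:ℕ):ℤ) from rfl, zpow_natCast]; exact goldenRatio_sq

lemma gold_zpow_neg_one : goldenRatio ^ (-1:ℤ) = goldenRatio - 1 := by
  rw [zpow_neg, zpow_one, gold_inv']

lemma gold_zpow_neg_two : goldenRatio ^ (-2:ℤ) = 2 - goldenRatio := by
  rw [zpow_neg, gold_zpow_two]
  exact inv_eq_of_mul_eq_one_right (by linear_combination (-1:ℝ) * goldenRatio_sq)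

/-- If `φ^i + φ^j = 1` then `{i,j} = {-1,-2}`. -/
lemma gold_sum_one {i j : ℤ} (h : goldenRatio ^ i + goldenRatio ^ j = 1) :
    (i = -1 ∧ j = -2) ∨ (i = -2 ∧ j = -1) := by
  have hφ1 : (1:ℝ) < goldenRatio := one_lt_goldenRatio
  have hφ0 : (0:ℝ) < goldenRatio := by linarith
  have hinj : Function.Injective (fun n : ℤ => goldenRatio ^ n) :=
    (zpow_right_strictMono₀ hφ1).injective
  have hpi : (0:ℝ) < goldenRatio ^ i := zpow_pos hφ0 i
  have hpj : (0:ℝ) < goldenRatio ^ j := zpow_pos hφ0 j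
  have hi1 : goldenRatio ^ i < goldenRatio ^ (0:ℤ) := by
    rw [zpow_zero]; linarith
  have hj1 : goldenRatio ^ j < goldenRatio ^ (0:ℤ) := by
    rw [zpow_zero]; linarith
  have hi : i ≤ -1 := by have := (zpow_lt_zpow_iff_right₀ hφ1).mp hi1; omega
  have hj : j ≤ -1 := by have := (zpow_lt_zpow_iff_right₀ hφ1).mp hj1; omega
  have hm2 : goldenRatio ^ (-2:ℤ) = 1 - goldenRatio ^ (-1:ℤ) := by
    rw [gold_zpow_neg_two, gold_zpow_neg_one]; ring
  rcases eq_or_lt_of_le hi with hi' | hi'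
  · left
    refine ⟨hi', hinj ?_⟩
    simp only
    rw [hm2, ← hi']
    linarith
  · rcases eq_or_lt_of_le hj with hj' | hj'
    · right
      refine ⟨hinj ?_, hj'⟩
      simp only
      rw [hm2, ← hj']
      linarith
    · exfalso
      have hi2 : goldenRatio ^ i ≤ goldenRatio ^ (-2:ℤ) :=
        zpow_le_zpow_right₀ hφ1.le (by omega)
      have hj2 : goldenRatio ^ j ≤ goldenRatio ^ (-2:ℤ) :=
        zpow_le_zpow_right₀ hφ1.le (by omega)
      rw [gold_zpow_neg_two] at hi2 hj2
      have := gold_gt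
      linarith

lemma gold_add_eq {a b c : ℤ} (h : goldenRatio ^ a + goldenRatio ^ b = goldenRatio ^ c) :
    (a = c - 1 ∧ b = c - 2) ∨ (a = c - 2 ∧ b = c - 1) := by
  have hφ0 : (goldenRatio : ℝ) ≠ 0 := ne_of_gt goldenRatio_pos
  have h1 : goldenRatio ^ (a - c) + goldenRatio ^ (b - c) = 1 := by
    have e : ∀ x : ℤ, goldenRatio ^ (x - c) = goldenRatio ^ x * goldenRatio ^ (-c) := by
      intro x; rw [← zpow_add₀ hφ0]; ring_nf
    rw [e, e, ← add_mul, h, ← zpow_add₀ hφ0]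
    simp
  rcases gold_sum_one h1 with ⟨h2, h3⟩ | ⟨h2, h3⟩
  · left; omega
  · right; omega

/-- Structural lemma: if `p`, `k`, `k - p` all lie on the golden lattice, then
`|k| = |p| φ^j` for some `j ∈ {-2,-1,1,2}`. -/
lemma gold_key {p k : ℝ} (hp : p ∈ logLattice goldenRatio)
    (hk : k ∈ logLattice goldenRatio) (hq : k - p ∈ logLattice goldenRatio) :
    ∃ j : ℤ, (j = -2 ∨ j = -1 ∨ j = 1 ∨ j = 2) ∧ |k| = |p| * goldenRatio ^ j := by
  have hφ0 : (goldenRatio : ℝ) ≠ 0 := ne_of_gt goldenRatio_pos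
  obtain ⟨a, ha⟩ := hp
  obtain ⟨c, hc⟩ := hk
  obtain ⟨b, hb⟩ := hq
  have hpa : (0:ℝ) < goldenRatio ^ a := zpow_pos goldenRatio_pos a
  have hpb : (0:ℝ) < goldenRatio ^ b := zpow_pos goldenRatio_pos b
  have hpc : (0:ℝ) < goldenRatio ^ c := zpow_pos goldenRatio_pos c
  have habs_p : |p| = goldenRatio ^ a := by
    rcases ha with h | h <;> rw [h] <;> simp [abs_of_pos hpa]
  have habs_k : |k| = goldenRatio ^ c := by
    rcases hc with h | h <;> rw [h] <;> simp [abs_of_pos hpc]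
  have conc : ∀ j : ℤ, (j = -2 ∨ j = -1 ∨ j = 1 ∨ j = 2) → c = a + j →
      ∃ j : ℤ, (j = -2 ∨ j = -1 ∨ j = 1 ∨ j = 2) ∧ |k| = |p| * goldenRatio ^ j := by
    intro j hj hcj
    exact ⟨j, hj, by rw [habs_k, habs_p, ← zpow_add₀ hφ0, hcj]⟩
  rcases ha with ha | ha <;> rcases hc with hc | hc <;> rcases hb with hb | hb <;>
      rw [ha, hc] at hb
  · rcases gold_add_eq (a := a) (b := b) (c := c) (by linarith) with ⟨h1, h2⟩ | ⟨h1, h2⟩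
    · exact conc 1 (by omega) (by omega)
    · exact conc 2 (by omega) (by omega)
  · rcases gold_add_eq (a := c) (b := b) (c := a) (by linarith) with ⟨h1, h2⟩ | ⟨h1, h2⟩
    · exact conc (-1) (by omega) (by omega)
    · exact conc (-2) (by omega) (by omega)
  · exact absurd hb (by nlinarith)
  · rcases gold_add_eq (a := c) (b := a) (c := b) (by linarith) with ⟨h1, h2⟩ | ⟨h1, h2⟩
    · exact conc 1 (by omega) (by omega)
    · exact conc (-1) (by omega) (by omega)
  · rcases gold_add_eq (a := c) (b := a) (c := b) (by linarith) with ⟨h1, h2⟩ | ⟨h1, h2⟩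
    · exact conc 1 (by omega) (by omega)
    · exact conc (-1) (by omega) (by omega)
  · exact absurd hb (by nlinarith)
  · rcases gold_add_eq (a := b) (b := c) (c := a) (by linarith) with ⟨h1, h2⟩ | ⟨h1, h2⟩
    · exact conc (-2) (by omega) (by omega)
    · exact conc (-1) (by omega) (by omega)
  · rcases gold_add_eq (a := a) (b := b) (c := c) (by linarith) with ⟨h1, h2⟩ | ⟨h1, h2⟩
    · exact conc 1 (by omega) (by omega)
    · exact conc 2 (by omega) (by omega)

/-! ### Candidate sets -/

/-- The 8-element candidate set `{± r φ^j : j ∈ {-2,-1,1,2}}`. -/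
noncomputable def candSet (r : ℝ) : Finset ℝ :=
  {r * goldenRatio ^ (-2:ℤ), -(r * goldenRatio ^ (-2:ℤ)),
   r * goldenRatio ^ (-1:ℤ), -(r * goldenRatio ^ (-1:ℤ)),
   r * goldenRatio ^ (1:ℤ), -(r * goldenRatio ^ (1:ℤ)),
   r * goldenRatio ^ (2:ℤ), -(r * goldenRatio ^ (2:ℤ))}

lemma card_candSet (r : ℝ) : (candSet r).card ≤ 8 := by
  unfold candSet
  refine (Finset.card_insert_le _ _).trans (Nat.succ_le_succ ?_)
  refine (Finset.card_insert_le _ _).trans (Nat.succ_le_succ ?_)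
  refine (Finset.card_insert_le _ _).trans (Nat.succ_le_succ ?_)
  refine (Finset.card_insert_le _ _).trans (Nat.succ_le_succ ?_)
  refine (Finset.card_insert_le _ _).trans (Nat.succ_le_succ ?_)
  refine (Finset.card_insert_le _ _).trans (Nat.succ_le_succ ?_)
  refine (Finset.card_insert_le _ _).trans (Nat.succ_le_succ ?_)
  simp

lemma mem_candSet_of (r x : ℝ) (j : ℤ) (hj : j = -2 ∨ j = -1 ∨ j = 1 ∨ j = 2)
    (hx : x = r * goldenRatio ^ j ∨ x = -(r * goldenRatio ^ j)) : x ∈ candSet r := by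
  simp only [candSet, Finset.mem_insert, Finset.mem_singleton]
  rcases hj with rfl | rfl | rfl | rfl <;> tauto

lemma key_abs_le {p k : ℝ} (hp : p ∈ logLattice goldenRatio)
    (hk : k ∈ logLattice goldenRatio) (hq : k - p ∈ logLattice goldenRatio) :
    |k| ≤ goldenRatio ^ 2 * |p| := by
  obtain ⟨j, hj, he⟩ := gold_key hp hk hq
  have h2 : goldenRatio ^ j ≤ goldenRatio ^ (2:ℤ) :=
    zpow_le_zpow_right₀ one_lt_goldenRatio.le (by omega)
  calc |k| = |p| * goldenRatio ^ j := he
    _ ≤ |p| * goldenRatio ^ (2:ℤ) := mul_le_mul_of_nonneg_left h2 (abs_nonneg p)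
    _ = goldenRatio ^ 2 * |p| := by
        rw [mul_comm]; congr 1

lemma key_mem_left {p k : ℝ} (hp : p ∈ logLattice goldenRatio)
    (hk : k ∈ logLattice goldenRatio) (hq : k - p ∈ logLattice goldenRatio) :
    k ∈ candSet |p| := by
  obtain ⟨j, hj, he⟩ := gold_key hp hk hq
  apply mem_candSet_of _ _ j hj
  rcases abs_choice k with h | h
  · left; rw [← h]; exact he
  · right; rw [← he]; linarith

lemma key_mem_right {p k : ℝ} (hp : p ∈ logLattice goldenRatio)
    (hk : k ∈ logLattice goldenRatio) (hq : k - p ∈ logLattice goldenRatio) :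
    p ∈ candSet |k| := by
  obtain ⟨j, hj, he⟩ := gold_key hp hk hq
  have hφ0 : (goldenRatio : ℝ) ≠ 0 := ne_of_gt goldenRatio_pos
  have he' : |p| = |k| * goldenRatio ^ (-j) := by
    rw [he, mul_assoc, ← zpow_add₀ hφ0]
    norm_num
  apply mem_candSet_of _ _ (-j) (by omega)
  rcases abs_choice p with h | h
  · left; rw [← h]; exact he'
  · right; rw [← he']; linarith

/-- Calculus inequality on the golden-mean lattice: for every `m ≥ 1` there is a
constant `C > 0` with
`‖f ∗ g‖_{h^m} ≤ C (‖f‖_{h^m} ‖g‖_{ℓ^∞} + ‖Df‖_{ℓ^∞} ‖g‖_{h^{m−1}})`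
for all finitely supported `f, g` supported on the lattice. -/
theorem calculus_inequality (φ : ℝ) (hφ : φ = (1 + Real.sqrt 5) / 2)
    (m : ℕ) (hm : 1 ≤ m) :
    ∃ C : ℝ, 0 < C ∧ ∀ f g : ℝ → ℂ,
      (Function.support f).Finite → (Function.support g).Finite →
      Function.support f ⊆ logLattice φ → Function.support g ⊆ logLattice φ →
      hNorm (logLattice φ) m (latticeConv (logLattice φ) f g) ≤
        C * (hNorm (logLattice φ) m f * linfNorm (logLattice φ) g +
          DlinfNorm (logLattice φ) f * hNorm (logLattice φ) (m - 1) g) := by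
  have hφg : φ = goldenRatio := hφ
  subst hφg
  refine ⟨8 * goldenRatio ^ (2*m), by positivity, ?_⟩
  intro f g hf hg hfΛ hgΛ
  set Λ : Set ℝ := logLattice goldenRatio with hΛdef
  set B := linfNorm Λ g with hBdef
  set A := hNorm Λ m f with hAdef
  set T := hf.toFinset with hTdef
  -- basic positivity facts
  have hB0 : 0 ≤ B := by
    rw [hBdef]; unfold linfNorm
    exact Real.iSup_nonneg fun k => Real.iSup_nonneg fun _ => norm_nonneg _
  have hA0 : 0 ≤ A := Real.sqrt_nonneg _
  have hDE : 0 ≤ DlinfNorm Λ f * hNorm Λ (m-1) g := by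
    refine mul_nonneg ?_ (Real.sqrt_nonneg _)
    unfold DlinfNorm
    exact Real.iSup_nonneg fun k => Real.iSup_nonneg fun _ =>
      mul_nonneg (abs_nonneg _) (norm_nonneg _)
  -- the sup bound for g
  have hBle : ∀ q ∈ Λ, ‖g q‖ ≤ B := by
    intro q hq
    set M : ℝ := ∑ x ∈ hg.toFinset, ‖g x‖ with hMdef
    have hM0 : 0 ≤ M := Finset.sum_nonneg fun x _ => norm_nonneg _
    have hM : ∀ k : ℝ, ‖g k‖ ≤ M := by
      intro k
      by_cases h : g k = 0
      · simp [h, hM0]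
      · exact Finset.single_le_sum (f := fun x => ‖g x‖)
          (fun x _ => norm_nonneg _) (hg.mem_toFinset.mpr h)
    have hbdd : BddAbove (Set.range fun k : ℝ => ⨆ _ : k ∈ Λ, ‖g k‖) := by
      refine ⟨M, ?_⟩
      rintro x ⟨k, rfl⟩
      exact Real.iSup_le (fun _ => hM k) hM0
    have h1 : ‖g q‖ = ⨆ _ : q ∈ Λ, ‖g q‖ := by
      haveI : Nonempty (q ∈ Λ) := ⟨hq⟩
      exact (ciSup_const).symm
    rw [hBdef]; unfold linfNorm
    rw [h1]
    exact le_ciSup hbdd q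
  -- the convolution formula
  have convEq : ∀ k : ℝ, latticeConv Λ f g k
      = ∑ p ∈ T, (if k - p ∈ Λ then f p * g (k - p) else 0) := by
    intro k
    have inner : ∀ p : ℝ, (∑ᶠ q ∈ Λ, if p + q = k then f p * g q else 0)
        = (if k - p ∈ Λ then f p * g (k - p) else 0) := by
      intro p
      rw [finsum_mem_def, finsum_eq_single _ (k - p) ?_]
      · rw [Set.indicator_apply]
        by_cases h : (k - p) ∈ Λ <;> simp [h]
      · intro x hx
        rw [Set.indicator_apply]
        have hcond : ¬(p + x = k) := fun hh => hx (by linarith)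
        by_cases h : x ∈ Λ <;> simp [h, hcond]
    unfold latticeConv
    rw [finsum_mem_congr rfl (fun p _ => inner p)]
    have hsub : Λ ∩ Function.support
        (fun p => if k - p ∈ Λ then f p * g (k - p) else 0) ⊆ Function.support f := by
      rintro x ⟨-, hx⟩
      rw [Function.mem_support] at hx ⊢
      intro hfx
      apply hx
      by_cases h : (k - x) ∈ Λ <;> simp [h, hfx]
    have hGfin := hf.subset hsub
    rw [finsum_mem_eq_sum _ hGfin]
    refine Finset.sum_subset ?_ ?_
    · intro x hx
      rw [Set.Finite.mem_toFinset] at hx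
      exact hf.mem_toFinset.mpr (hsub hx)
    · intro x hxT hxn
      by_contra h
      apply hxn
      rw [Set.Finite.mem_toFinset]
      refine ⟨hfΛ (hf.mem_toFinset.mp hxT), h⟩
  -- finiteness of the support of the summand
  have hWsub : Λ ∩ Function.support
      (fun k => |k| ^ (2*m) * ‖latticeConv Λ f g k‖ ^ 2)
      ⊆ Set.image2 (· + ·) (Function.support f) (Function.support g) := by
    rintro k ⟨hkΛ, hkw⟩
    rw [Function.mem_support] at hkw
    have hconv : latticeConv Λ f g k ≠ 0 := by
      intro h; apply hkw; rw [h]; simp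
    rw [convEq k] at hconv
    obtain ⟨p, hpT, hpne⟩ := Finset.exists_ne_zero_of_sum_ne_zero hconv
    by_cases h : (k - p) ∈ Λ
    · rw [if_pos h] at hpne
      have hfp : f p ≠ 0 := fun hh => hpne (by rw [hh]; ring)
      have hgp : g (k - p) ≠ 0 := fun hh => hpne (by rw [hh]; ring)
      exact ⟨p, hfp, k - p, hgp, by ring⟩
    · rw [if_neg h] at hpne; exact absurd rfl hpne
  have hW : (Λ ∩ Function.support
      (fun k => |k| ^ (2*m) * ‖latticeConv Λ f g k‖ ^ 2)).Finite :=
    (Set.Finite.image2 _ hf hg).subset hWsub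
  -- rewrite the h-norm of the convolution as a finite sum
  have sumEq : (∑ᶠ k ∈ Λ, |k| ^ (2*m) * ‖latticeConv Λ f g k‖ ^ 2)
      = ∑ k ∈ hW.toFinset, |k| ^ (2*m) * ‖latticeConv Λ f g k‖ ^ 2 :=
    finsum_mem_eq_sum _ hW
  set KW := hW.toFinset with hKWdef
  -- the squared h^m norm of f as a finite sum
  have hA2 : ∑ p ∈ T, |p| ^ (2*m) * ‖f p‖ ^ 2 = A ^ 2 := by
    have husub : Λ ∩ Function.support (fun p => |p| ^ (2*m) * ‖f p‖ ^ 2)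
        ⊆ Function.support f := by
      rintro x ⟨-, hx⟩
      rw [Function.mem_support] at hx ⊢
      intro hfx; apply hx; simp [hfx]
    have hufin := hf.subset husub
    have e1 : (∑ᶠ p ∈ Λ, |p| ^ (2*m) * ‖f p‖ ^ 2) = ∑ p ∈ hufin.toFinset, |p| ^ (2*m) * ‖f p‖ ^ 2 :=
      finsum_mem_eq_sum _ hufin
    have e2 : ∑ p ∈ hufin.toFinset, |p| ^ (2*m) * ‖f p‖ ^ 2
        = ∑ p ∈ T, |p| ^ (2*m) * ‖f p‖ ^ 2 := by
      refine Finset.sum_subset ?_ ?_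
      · intro x hx
        rw [Set.Finite.mem_toFinset] at hx
        exact hf.mem_toFinset.mpr (husub hx)
      · intro x hxT hxn
        by_contra h
        apply hxn
        rw [Set.Finite.mem_toFinset]
        exact ⟨hfΛ (hf.mem_toFinset.mp hxT), h⟩
    have hnn : 0 ≤ ∑ᶠ p ∈ Λ, |p| ^ (2*m) * ‖f p‖ ^ 2 := by
      rw [e1, e2]
      exact Finset.sum_nonneg fun p _ => by positivity
    rw [hAdef]
    unfold hNorm
    rw [Real.sq_sqrt hnn, e1, e2]
  -- the per-k bound
  have step5 : ∀ k ∈ KW, |k| ^ (2*m) * ‖latticeConv Λ f g k‖ ^ 2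
      ≤ 8 * (goldenRatio ^ (2*m) * B) ^ 2
        * ∑ p ∈ T.filter (fun p => k - p ∈ Λ), |p| ^ (2*m) * ‖f p‖ ^ 2 := by
    intro k hkKW
    have hkΛ : k ∈ Λ := by
      rw [hKWdef, Set.Finite.mem_toFinset] at hkKW
      exact hkKW.1
    set Tk := T.filter (fun p => k - p ∈ Λ) with hTkdef
    have hpmem : ∀ p ∈ Tk, p ∈ Λ ∧ (k - p) ∈ Λ := by
      intro p hp
      obtain ⟨hpT, hp2⟩ := Finset.mem_filter.mp hp
      exact ⟨hfΛ (hf.mem_toFinset.mp hpT), hp2⟩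
    have s2 : ‖latticeConv Λ f g k‖ ≤ ∑ p ∈ Tk, ‖f p‖ * B := by
      rw [convEq k, ← Finset.sum_filter]
      refine (norm_sum_le _ _).trans (Finset.sum_le_sum ?_)
      intro p hp
      rw [norm_mul]
      exact mul_le_mul_of_nonneg_left (hBle _ (hpmem p hp).2) (norm_nonneg _)
    have s3 : ∀ p ∈ Tk, |k| ^ m ≤ goldenRatio ^ (2*m) * |p| ^ m := by
      intro p hp
      obtain ⟨hpΛ, hp2⟩ := hpmem p hp
      have h1 := key_abs_le hpΛ hkΛ hp2
      calc |k| ^ m ≤ (goldenRatio ^ 2 * |p|) ^ m := pow_le_pow_left₀ (abs_nonneg k) h1 m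
        _ = goldenRatio ^ (2*m) * |p| ^ m := by rw [mul_pow, ← pow_mul]
    have s4 : |k| ^ m * ‖latticeConv Λ f g k‖
        ≤ goldenRatio ^ (2*m) * B * ∑ p ∈ Tk, |p| ^ m * ‖f p‖ := by
      calc |k| ^ m * ‖latticeConv Λ f g k‖
          ≤ |k| ^ m * ∑ p ∈ Tk, ‖f p‖ * B :=
            mul_le_mul_of_nonneg_left s2 (by positivity)
        _ = ∑ p ∈ Tk, |k| ^ m * (‖f p‖ * B) := Finset.mul_sum _ _ _
        _ ≤ ∑ p ∈ Tk, goldenRatio ^ (2*m) * B * (|p| ^ m * ‖f p‖) := by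
            refine Finset.sum_le_sum ?_
            intro p hp
            have h3 := s3 p hp
            have h4 : |k| ^ m * (‖f p‖ * B) ≤ (goldenRatio ^ (2*m) * |p| ^ m) * (‖f p‖ * B) :=
              mul_le_mul_of_nonneg_right h3 (mul_nonneg (norm_nonneg _) hB0)
            exact h4.trans (le_of_eq (by ring))
        _ = goldenRatio ^ (2*m) * B * ∑ p ∈ Tk, |p| ^ m * ‖f p‖ := (Finset.mul_sum _ _ _).symm
    have hcardTk : ((Tk.card : ℕ) : ℝ) ≤ 8 := by
      have hsub : Tk ⊆ candSet |k| := by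
        intro p hp
        obtain ⟨hpΛ, hp2⟩ := hpmem p hp
        exact key_mem_right hpΛ hkΛ hp2
      have := (Finset.card_le_card hsub).trans (card_candSet _)
      exact_mod_cast this
    have hsumnn : 0 ≤ ∑ p ∈ Tk, (|p| ^ m * ‖f p‖) ^ 2 :=
      Finset.sum_nonneg fun p _ => by positivity
    calc |k| ^ (2*m) * ‖latticeConv Λ f g k‖ ^ 2
        = (|k| ^ m * ‖latticeConv Λ f g k‖) ^ 2 := by
          rw [mul_pow, ← pow_mul, mul_comm m 2]
      _ ≤ (goldenRatio ^ (2*m) * B * ∑ p ∈ Tk, |p| ^ m * ‖f p‖) ^ 2 :=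
          pow_le_pow_left₀ (by positivity) s4 2
      _ = (goldenRatio ^ (2*m) * B) ^ 2 * (∑ p ∈ Tk, |p| ^ m * ‖f p‖) ^ 2 := by ring
      _ ≤ (goldenRatio ^ (2*m) * B) ^ 2 * ((Tk.card : ℝ) * ∑ p ∈ Tk, (|p| ^ m * ‖f p‖) ^ 2) :=
          mul_le_mul_of_nonneg_left sq_sum_le_card_mul_sum_sq (by positivity)
      _ ≤ (goldenRatio ^ (2*m) * B) ^ 2 * (8 * ∑ p ∈ Tk, (|p| ^ m * ‖f p‖) ^ 2) :=
          mul_le_mul_of_nonneg_left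
            (mul_le_mul_of_nonneg_right hcardTk hsumnn) (by positivity)
      _ = 8 * (goldenRatio ^ (2*m) * B) ^ 2 * ∑ p ∈ Tk, (|p| ^ m * ‖f p‖) ^ 2 := by ring
      _ = 8 * (goldenRatio ^ (2*m) * B) ^ 2 * ∑ p ∈ Tk, |p| ^ (2*m) * ‖f p‖ ^ 2 := by
          congr 1
          refine Finset.sum_congr rfl fun p _ => ?_
          rw [mul_pow, ← pow_mul, mul_comm m 2]
  -- double counting
  have hDC : ∑ k ∈ KW, ∑ p ∈ T.filter (fun p => k - p ∈ Λ), |p| ^ (2*m) * ‖f p‖ ^ 2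
      ≤ 8 * ∑ p ∈ T, |p| ^ (2*m) * ‖f p‖ ^ 2 := by
    have e1 : ∀ k : ℝ, ∑ p ∈ T.filter (fun p => k - p ∈ Λ), |p| ^ (2*m) * ‖f p‖ ^ 2
        = ∑ p ∈ T, if k - p ∈ Λ then |p| ^ (2*m) * ‖f p‖ ^ 2 else 0 :=
      fun k => Finset.sum_filter _ _
    calc ∑ k ∈ KW, ∑ p ∈ T.filter (fun p => k - p ∈ Λ), |p| ^ (2*m) * ‖f p‖ ^ 2
        = ∑ p ∈ T, ∑ k ∈ KW, (if k - p ∈ Λ then |p| ^ (2*m) * ‖f p‖ ^ 2 else 0) := by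
          rw [Finset.sum_congr rfl (fun k _ => e1 k), Finset.sum_comm]
      _ ≤ ∑ p ∈ T, 8 * (|p| ^ (2*m) * ‖f p‖ ^ 2) := by
          refine Finset.sum_le_sum ?_
          intro p hpT
          have hpΛ : p ∈ Λ := hfΛ (hf.mem_toFinset.mp hpT)
          rw [← Finset.sum_filter, Finset.sum_const, nsmul_eq_mul]
          have hcard : ((KW.filter (fun k => k - p ∈ Λ)).card : ℝ) ≤ 8 := by
            have hsub : KW.filter (fun k => k - p ∈ Λ) ⊆ candSet |p| := by
              intro k hk
              obtain ⟨hk1, hk2⟩ := Finset.mem_filter.mp hk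
              have hkΛ : k ∈ Λ := by
                rw [hKWdef, Set.Finite.mem_toFinset] at hk1
                exact hk1.1
              exact key_mem_left hpΛ hkΛ hk2
            have := (Finset.card_le_card hsub).trans (card_candSet _)
            exact_mod_cast this
          exact mul_le_mul_of_nonneg_right hcard (by positivity)
      _ = 8 * ∑ p ∈ T, |p| ^ (2*m) * ‖f p‖ ^ 2 := by rw [Finset.mul_sum]
  -- assemble
  have hS : ∑ k ∈ KW, |k| ^ (2*m) * ‖latticeConv Λ f g k‖ ^ 2
      ≤ (8 * goldenRatio ^ (2*m) * (A * B)) ^ 2 := by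
    calc ∑ k ∈ KW, |k| ^ (2*m) * ‖latticeConv Λ f g k‖ ^ 2
        ≤ ∑ k ∈ KW, 8 * (goldenRatio ^ (2*m) * B) ^ 2
            * ∑ p ∈ T.filter (fun p => k - p ∈ Λ), |p| ^ (2*m) * ‖f p‖ ^ 2 :=
          Finset.sum_le_sum step5
      _ = 8 * (goldenRatio ^ (2*m) * B) ^ 2
            * ∑ k ∈ KW, ∑ p ∈ T.filter (fun p => k - p ∈ Λ), |p| ^ (2*m) * ‖f p‖ ^ 2 :=
          (Finset.mul_sum _ _ _).symm
      _ ≤ 8 * (goldenRatio ^ (2*m) * B) ^ 2 * (8 * ∑ p ∈ T, |p| ^ (2*m) * ‖f p‖ ^ 2) :=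
          mul_le_mul_of_nonneg_left hDC (by positivity)
      _ = 8 * (goldenRatio ^ (2*m) * B) ^ 2 * (8 * A ^ 2) := by rw [hA2]
      _ = (8 * goldenRatio ^ (2*m) * (A * B)) ^ 2 := by ring
  have hmain : hNorm Λ m (latticeConv Λ f g) ≤ 8 * goldenRatio ^ (2*m) * (A * B) := by
    unfold hNorm
    rw [sumEq]
    refine (Real.sqrt_le_sqrt hS).trans (le_of_eq (Real.sqrt_sq ?_))
    have h8 : (0:ℝ) ≤ 8 * goldenRatio ^ (2*m) := by positivity
    exact mul_nonneg h8 (mul_nonneg hA0 hB0)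
  calc hNorm Λ m (latticeConv Λ f g) ≤ 8 * goldenRatio ^ (2*m) * (A * B) := hmain
    _ ≤ 8 * goldenRatio ^ (2*m) * (A * B + DlinfNorm Λ f * hNorm Λ (m-1) g) :=
        mul_le_mul_of_nonneg_left (le_add_of_nonneg_right hDE) (by positivity)
end
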